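/- arXiv:1507.00228 — 7 statements merged into one kernel-verified Lean document; each statement's English description precedes it below -/
import Mathlib

section
/- Let S = {(x,y) ∈ ℝ^n × ℝ^p : Gx + Hy ≥ h} be nonempty and let P(x,y) = (y, -e^T y) ∈ ℝ^{p+1}, where e = (1,...,1)^T. Then P[S] ⊆ {z ∈ ℝ^{p+1} : e_{p+1}-augmented sum of coordinates equals 0}, i.e., every z ∈ P[S] satisfies z_1 + ... + z_{p+1} = 0; consequently every feasible point and every feasible direction of S is a minimizer of the multiple objective linear program minimizing P(x,y) over S with respect to the ordering cone ℝ^{p+1}_+. -/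
open Pointwise Set

theorem molp_all_points_and_directions_are_minimizers
    (k n p : ℕ) (G : Matrix (Fin k) (Fin n) ℝ) (H : Matrix (Fin k) (Fin p) ℝ)
    (h : Fin k → ℝ)
    (S : Set ((Fin n → ℝ) × (Fin p → ℝ)))
    (hS : S = {s | ∀ i, h i ≤ G.mulVec s.1 i + H.mulVec s.2 i})
    (hne : S.Nonempty)
    (P : (Fin n → ℝ) × (Fin p → ℝ) → (Fin (p + 1) → ℝ))
    (hP : P = fun s => Fin.snoc s.2 (-(∑ i, s.2 i))) :
    (∀ s ∈ S, ∑ j, P s j = 0) ∧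
    -- every feasible point is a minimizer
    (∀ s ∈ S, ¬ ∃ v ∈ S, (∀ j, P v j ≤ P s j) ∧ P v ≠ P s) ∧
    -- every feasible direction is a minimizer (of the homogeneous problem)
    (∀ s : (Fin n → ℝ) × (Fin p → ℝ), s ≠ 0 →
      (∀ i, (0:ℝ) ≤ G.mulVec s.1 i + H.mulVec s.2 i) →
      ¬ ∃ v : (Fin n → ℝ) × (Fin p → ℝ),
          (∀ i, (0:ℝ) ≤ G.mulVec v.1 i + H.mulVec v.2 i) ∧
          (∀ j, P v j ≤ P s j) ∧ P v ≠ P s) := by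
  have hsum : ∀ s, ∑ j, P s j = 0 := by
    intro s
    subst hP
    simp [Fin.sum_univ_castSucc]
  have key : ∀ s v, (∀ j, P v j ≤ P s j) → P v = P s := by
    intro s v hle
    have h0 : ∑ j, (P s j - P v j) = 0 := by
      rw [Finset.sum_sub_distrib, hsum, hsum, sub_zero]
    have := (Finset.sum_eq_zero_iff_of_nonneg
      (fun j _ => sub_nonneg.mpr (hle j))).mp h0
    funext j
    have := this j (Finset.mem_univ j)
    linarith
  refine ⟨fun s _ => hsum s, ?_, ?_⟩
  · rintro s _ ⟨v, _, hle, hne'⟩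
    exact hne' (key s v hle)
  · rintro s _ _ ⟨v, _, hle, hne'⟩
    exact hne' (key s v hle)
end

section
/- Let Y ⊆ ℝ^p be a polyhedron given as Y = {y : ∃x, Gx + Hy ≥ h}, assume Y ≠ ∅, and consider the MOLP minimizing P(x,y) = (y, -e^T y) over S = {(x,y) : Gx + Hy ≥ h} with ordering cone ℝ^{p+1}_+. If (S_poi, S_dir) is a solution of this MOLP (a finite infimizer consisting of minimizers), then Y = conv(proj_y S_poi) + cone(proj_y S_dir), i.e., (S_poi, S_dir) is a solution of the polyhedral projection problem. -/
open Pointwise Set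

/-- `cone B = {λ x : λ ≥ 0, x ∈ conv B}`, with `cone ∅ = {0}`. -/
def coneOf {q : ℕ} (B : Set (Fin q → ℝ)) : Set (Fin q → ℝ) :=
  insert 0 {x | ∃ l : ℝ, 0 ≤ l ∧ ∃ b ∈ convexHull ℝ B, x = l • b}

lemma image_coneOf {q q' : ℕ} (f : (Fin q → ℝ) →ₗ[ℝ] (Fin q' → ℝ)) (B : Set (Fin q → ℝ)) :
    f '' coneOf B = coneOf (f '' B) := by
  unfold coneOf
  rw [Set.image_insert_eq, map_zero]
  congr 1
  ext y
  constructor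
  · rintro ⟨x, ⟨l, hl, b, hb, rfl⟩, rfl⟩
    exact ⟨l, hl, f b, by rw [← f.image_convexHull]; exact Set.mem_image_of_mem _ hb,
      map_smul f l b⟩
  · rintro ⟨l, hl, b', hb', rfl⟩
    rw [← f.image_convexHull] at hb'
    obtain ⟨b, hb, rfl⟩ := hb'
    exact ⟨l • b, ⟨l, hl, b, hb, rfl⟩, map_smul f l b⟩

lemma convex_feas {k n p : ℕ} (G : Matrix (Fin k) (Fin n) ℝ) (H : Matrix (Fin k) (Fin p) ℝ)
    (c : Fin k → ℝ) :
    Convex ℝ {s : (Fin n → ℝ) × (Fin p → ℝ) | ∀ i, c i ≤ G.mulVec s.1 i + H.mulVec s.2 i} := by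
  intro s hs t ht a b ha hb hab i
  have h1 := hs i
  have h2 := ht i
  have e1 : (a • s + b • t).1 = a • s.1 + b • t.1 := rfl
  have e2 : (a • s + b • t).2 = a • s.2 + b • t.2 := rfl
  rw [e1, e2, Matrix.mulVec_add, Matrix.mulVec_add, Matrix.mulVec_smul, Matrix.mulVec_smul,
    Matrix.mulVec_smul, Matrix.mulVec_smul]
  simp only [Pi.add_apply, Pi.smul_apply, smul_eq_mul]
  have hc : c i = a * c i + b * c i := by rw [← add_mul, hab, one_mul]
  nlinarith [mul_le_mul_of_nonneg_left h1 ha, mul_le_mul_of_nonneg_left h2 hb]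

theorem molp_solution_solves_polyhedral_projection
    (k n p : ℕ) (G : Matrix (Fin k) (Fin n) ℝ) (H : Matrix (Fin k) (Fin p) ℝ)
    (h : Fin k → ℝ)
    (Y : Set (Fin p → ℝ))
    (hY : Y = {y | ∃ x : Fin n → ℝ, ∀ i, h i ≤ G.mulVec x i + H.mulVec y i})
    (hne : Y.Nonempty)
    (S : Set ((Fin n → ℝ) × (Fin p → ℝ)))
    (hS : S = {s | ∀ i, h i ≤ G.mulVec s.1 i + H.mulVec s.2 i})
    (P : (Fin n → ℝ) × (Fin p → ℝ) → (Fin (p + 1) → ℝ))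
    (hP : P = fun s => Fin.snoc s.2 (-(∑ i, s.2 i)))
    (Spoi Sdir : Set ((Fin n → ℝ) × (Fin p → ℝ)))
    (hfin1 : Spoi.Finite) (hfin2 : Sdir.Finite) (hpne : Spoi.Nonempty)
    -- feasibility
    (hfeas1 : Spoi ⊆ S)
    (hfeas2 : ∀ s ∈ Sdir, s ≠ 0 ∧ ∀ i, (0:ℝ) ≤ G.mulVec s.1 i + H.mulVec s.2 i)
    -- finite infimizer
    (hinf : convexHull ℝ (P '' Spoi) + coneOf (P '' Sdir) +
              {z : Fin (p + 1) → ℝ | ∀ j, 0 ≤ z j} =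
            (P '' S) + {z : Fin (p + 1) → ℝ | ∀ j, 0 ≤ z j})
    -- all points are minimizers
    (hmin1 : ∀ s ∈ Spoi, ¬ ∃ v ∈ S, (∀ j, P v j ≤ P s j) ∧ P v ≠ P s)
    -- all directions are minimizers
    (hmin2 : ∀ s ∈ Sdir, ¬ ∃ v : (Fin n → ℝ) × (Fin p → ℝ),
        (∀ i, (0:ℝ) ≤ G.mulVec v.1 i + H.mulVec v.2 i) ∧
        (∀ j, P v j ≤ P s j) ∧ P v ≠ P s) :
    Y = convexHull ℝ (Prod.snd '' Spoi) + coneOf (Prod.snd '' Sdir) := by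
  -- the truncation linear map
  set Q : (Fin (p + 1) → ℝ) →ₗ[ℝ] (Fin p → ℝ) :=
    LinearMap.funLeft ℝ ℝ Fin.castSucc with hQ
  have hQP : ∀ s : (Fin n → ℝ) × (Fin p → ℝ), Q (P s) = s.2 := by
    intro s
    funext i
    simp [hQ, hP, LinearMap.funLeft, Fin.snoc_castSucc]
  -- every P-value sums to zero
  have hsumP : ∀ s : (Fin n → ℝ) × (Fin p → ℝ), ∑ j, P s j = 0 := by
    intro s
    rw [hP]
    rw [Fin.sum_univ_castSucc]
    simp [Fin.snoc_castSucc, Fin.snoc_last]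
  have hconvzero : Convex ℝ {z : Fin (p + 1) → ℝ | ∑ j, z j = 0} := by
    intro x hx y hy a b ha hb hab
    simp only [Set.mem_setOf_eq] at hx hy ⊢
    simp [Finset.sum_add_distrib, ← Finset.mul_sum, hx, hy]
  have hsumconv : ∀ B : Set ((Fin n → ℝ) × (Fin p → ℝ)),
      ∀ c ∈ convexHull ℝ (P '' B), ∑ j, c j = 0 := by
    intro B c hc
    have : convexHull ℝ (P '' B) ⊆ {z : Fin (p + 1) → ℝ | ∑ j, z j = 0} := by
      apply convexHull_min _ hconvzero
      rintro _ ⟨s, _, rfl⟩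
      exact hsumP s
    exact this hc
  have hsumcone : ∀ d ∈ coneOf (P '' Sdir), ∑ j, d j = 0 := by
    rintro d (rfl | ⟨l, hl, b, hb, rfl⟩)
    · simp
    · have hsb := hsumconv Sdir b hb
      simp only [Pi.smul_apply, smul_eq_mul]
      rw [← Finset.mul_sum, hsb, mul_zero]
  ext y
  constructor
  · -- Y ⊆ RHS
    intro hy
    rw [hY] at hy
    obtain ⟨x, hx⟩ := hy
    have hsmem : (x, y) ∈ S := by rw [hS]; exact hx
    have hz : P (x, y) ∈ (P '' S) + {z : Fin (p + 1) → ℝ | ∀ j, 0 ≤ z j} :=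
      ⟨P (x, y), Set.mem_image_of_mem _ hsmem, 0, fun j => le_refl 0, add_zero _⟩
    rw [← hinf] at hz
    obtain ⟨w, hw, r, hr, hzw⟩ := hz
    obtain ⟨c, hc, d, hd, rfl⟩ := hw
    have hzw' : c + d + r = P (x, y) := hzw
    -- r sums to zero, hence r = 0
    have hsz : ∑ j, P (x, y) j = 0 := hsumP _
    have hsr : ∑ j, r j = 0 := by
      have : ∑ j, (c + d + r) j = 0 := by rw [hzw']; exact hsz
      simp only [Pi.add_apply, Finset.sum_add_distrib] at this
      rw [hsumconv Spoi c hc, hsumcone d hd] at this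
      linarith
    have hr0 : r = 0 := by
      funext j
      have := (Finset.sum_eq_zero_iff_of_nonneg (fun j _ => hr j)).mp hsr j (Finset.mem_univ j)
      simpa using this
    rw [hr0, add_zero] at hzw'
    -- project with Q
    have hyeq : y = Q c + Q d := by
      have := congrArg Q hzw'
      rw [map_add, hQP] at this
      exact this.symm
    rw [hyeq]
    refine ⟨Q c, ?_, Q d, ?_, rfl⟩
    · have : Q '' convexHull ℝ (P '' Spoi) = convexHull ℝ (Prod.snd '' Spoi) := by
        rw [Q.image_convexHull, ← Set.image_comp]
        exact congrArg (convexHull ℝ) (Set.image_congr fun a _ => hQP a)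
      rw [← this]
      exact Set.mem_image_of_mem _ hc
    · have : Q '' coneOf (P '' Sdir) = coneOf (Prod.snd '' Sdir) := by
        rw [image_coneOf, ← Set.image_comp]
        exact congrArg coneOf (Set.image_congr fun a _ => hQP a)
      rw [← this]
      exact Set.mem_image_of_mem _ hd
  · -- RHS ⊆ Y
    rintro ⟨c', hc', d', hd', rfl⟩
    rw [hY]
    -- realize c' as the second component of a point in conv Spoi ⊆ S
    have hsnd : convexHull ℝ (Prod.snd '' Spoi) =
        (Prod.snd : (Fin n → ℝ) × (Fin p → ℝ) → Fin p → ℝ) '' convexHull ℝ Spoi := by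
      exact ((LinearMap.snd ℝ (Fin n → ℝ) (Fin p → ℝ)).image_convexHull Spoi).symm
    rw [hsnd] at hc'
    obtain ⟨c, hc, rfl⟩ := hc'
    have hcS : c ∈ S := by
      have : convexHull ℝ Spoi ⊆ S := by
        rw [hS];
        exact convexHull_min (by rw [← hS]; exact hfeas1) (convex_feas G H h)
      exact this hc
    rw [hS] at hcS
    rcases hd' with rfl | ⟨l, hl, b', hb', rfl⟩
    · exact ⟨c.1, by simpa using hcS⟩
    · have hsndd : convexHull ℝ (Prod.snd '' Sdir) =
          (Prod.snd : (Fin n → ℝ) × (Fin p → ℝ) → Fin p → ℝ) '' convexHull ℝ Sdir := by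
        exact ((LinearMap.snd ℝ (Fin n → ℝ) (Fin p → ℝ)).image_convexHull Sdir).symm
      rw [hsndd] at hb'
      obtain ⟨b, hb, rfl⟩ := hb'
      have hbD : ∀ i, (0:ℝ) ≤ G.mulVec b.1 i + H.mulVec b.2 i := by
        have : convexHull ℝ Sdir ⊆
            {s : (Fin n → ℝ) × (Fin p → ℝ) | ∀ i, (0:ℝ) ≤ G.mulVec s.1 i + H.mulVec s.2 i} :=
          convexHull_min (fun s hs => (hfeas2 s hs).2) (convex_feas G H 0)
        exact this hb
      refine ⟨c.1 + l • b.1, fun i => ?_⟩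
      rw [Matrix.mulVec_add, Matrix.mulVec_smul]
      have e : (c.2 + l • b.2 : Fin p → ℝ) = c.2 + l • b.2 := rfl
      rw [Matrix.mulVec_add, Matrix.mulVec_smul]
      simp only [Pi.add_apply, Pi.smul_apply, smul_eq_mul]
      have h1 := hcS i
      have h2 := mul_le_mul_of_nonneg_left (hbD i) hl
      nlinarith
end

section
/- Let 𝒫 = conv V + cone R with V ⊆ ℝ^q nonempty compact, R ⊆ ℝ^q\{0} compact, let C be a closed convex cone with 𝒫 + C ⊆ 𝒫 and L ∩ C = {0} where L is the lineality space of 𝒫, and let U be a complement of L. Then every extreme point v of 𝒫 ∩ U satisfies v ∈ (V \ (𝒫 + C\{0})) + L, i.e., v = v' + l for some v' ∈ V not dominated by C and some l ∈ L. -/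
open Pointwise Set

/-- recession cone `0⁺P = {d : P + d ⊆ P}` -/
def recCone {q : ℕ} (P : Set (Fin q → ℝ)) : Set (Fin q → ℝ) :=
  {d | ∀ y ∈ P, y + d ∈ P}

theorem extreme_points_come_from_nondominated_generators
    (q : ℕ) (V R : Set (Fin q → ℝ))
    (hVne : V.Nonempty) (hVcp : IsCompact V)
    (hRcp : IsCompact R) (hR0 : (0 : Fin q → ℝ) ∉ R)
    (P : Set (Fin q → ℝ)) (hP : P = convexHull ℝ V + coneOf R)
    (C : Set (Fin q → ℝ)) (hCne : C.Nonempty) (hCcl : IsClosed C)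
    (hCcv : Convex ℝ C) (hCcone : ∀ c ∈ C, ∀ l : ℝ, 0 ≤ l → l • c ∈ C)
    (hPC : P + C ⊆ P)
    (L : Set (Fin q → ℝ)) (hL : L = recCone P ∩ (-recCone P))
    (hLC : L ∩ C = {0})
    (U : Submodule ℝ (Fin q → ℝ))
    (hcompl1 : L ∩ (U : Set (Fin q → ℝ)) = {0})
    (hcompl2 : L + (U : Set (Fin q → ℝ)) = Set.univ) :
    ∀ v ∈ Set.extremePoints ℝ (P ∩ (U : Set (Fin q → ℝ))),
      v ∈ (V \ (P + (C \ {0}))) + L := by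
  intro v hv
  -- basic facts about coneOf R
  have hconeR_zero : (0 : Fin q → ℝ) ∈ coneOf R := Set.mem_insert _ _
  have hconeR_smul : ∀ t : ℝ, 0 ≤ t → ∀ x ∈ coneOf R, t • x ∈ coneOf R := by
    rintro t ht x (rfl | ⟨l, hl, b, hb, rfl⟩)
    · simpa using hconeR_zero
    · exact Set.mem_insert_of_mem _ ⟨t * l, mul_nonneg ht hl, b, hb, smul_smul t l b⟩
  have hconeR_add : ∀ x ∈ coneOf R, ∀ y ∈ coneOf R, x + y ∈ coneOf R := by
    rintro x (rfl | ⟨l₁, hl₁, b₁, hb₁, rfl⟩) y hy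
    · simpa using hy
    rcases hy with rfl | ⟨l₂, hl₂, b₂, hb₂, rfl⟩
    · rw [add_zero]; exact Set.mem_insert_of_mem _ ⟨l₁, hl₁, b₁, hb₁, rfl⟩
    rcases eq_or_lt_of_le (add_nonneg hl₁ hl₂) with hσ | hσ
    · have h1 : l₁ = 0 := by linarith [hl₁, hl₂, hσ.symm]
      have h2 : l₂ = 0 := by linarith [hl₁, hl₂, hσ.symm]
      simp [h1, h2, hconeR_zero]
    · refine Set.mem_insert_of_mem _ ⟨l₁ + l₂, le_of_lt hσ,
        (l₁ / (l₁ + l₂)) • b₁ + (l₂ / (l₁ + l₂)) • b₂, ?_, ?_⟩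
      · exact (convex_convexHull ℝ R) hb₁ hb₂ (div_nonneg hl₁ (le_of_lt hσ))
          (div_nonneg hl₂ (le_of_lt hσ)) (by field_simp)
      · rw [smul_add, smul_smul, smul_smul]
        have hne : l₁ + l₂ ≠ 0 := ne_of_gt hσ
        rw [mul_div_cancel₀ _ hne, mul_div_cancel₀ _ hne]
  have hconeR_conv : Convex ℝ (coneOf R) := by
    intro x hx y hy a b ha hb _
    exact hconeR_add _ (hconeR_smul a ha x hx) _ (hconeR_smul b hb y hy)
  have hPconv : Convex ℝ P := hP ▸ (convex_convexHull ℝ V).add hconeR_conv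
  have hVP : convexHull ℝ V ⊆ P := by
    rw [hP]; intro x hx; simpa using Set.add_mem_add hx hconeR_zero
  -- recession cone facts
  have hrec_zero : (0 : Fin q → ℝ) ∈ recCone P := fun y hy => by simpa using hy
  have hrec_add : ∀ a ∈ recCone P, ∀ b ∈ recCone P, a + b ∈ recCone P := by
    intro a ha b hb y hy
    rw [← add_assoc]; exact hb _ (ha y hy)
  have hrec_nsmul : ∀ (n : ℕ) (d : Fin q → ℝ), d ∈ recCone P → ∀ y ∈ P, y + (n : ℝ) • d ∈ P := by
    intro n d hd
    induction n with
    | zero => intro y hy; simpa using hy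
    | succ n ih =>
        intro y hy
        have := hd _ (ih y hy)
        have heq : y + ((n : ℝ) + 1) • d = y + (n : ℝ) • d + d := by
          rw [add_smul, one_smul, add_assoc]
        push_cast
        rw [heq]; exact this
  have hrec_smul : ∀ t : ℝ, 0 ≤ t → ∀ d ∈ recCone P, t • d ∈ recCone P := by
    intro t ht d hd y hy
    rcases eq_or_lt_of_le ht with h0 | h0
    · simpa [← h0] using hy
    obtain ⟨n, hn⟩ := exists_nat_ge t
    have hnpos : (0 : ℝ) < n := lt_of_lt_of_le h0 hn
    have hne : (n : ℝ) ≠ 0 := ne_of_gt hnpos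
    have key : y + t • d = (1 - t / n) • y + (t / n) • (y + (n : ℝ) • d) := by
      rw [smul_add, smul_smul, div_mul_cancel₀ _ hne, sub_smul, one_smul]
      abel
    rw [key]
    exact hPconv hy (hrec_nsmul n d hd y hy)
      (by rw [sub_nonneg]; exact div_le_one_of_le₀ hn (le_of_lt hnpos))
      (div_nonneg (le_of_lt h0) (le_of_lt hnpos)) (by ring)
  have hconeR_rec : coneOf R ⊆ recCone P := by
    intro d hd y hy
    rw [hP] at hy ⊢
    rw [Set.mem_add] at hy
    obtain ⟨a, ha, b, hb, rfl⟩ := hy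
    rw [add_assoc]
    exact Set.add_mem_add ha (hconeR_add _ hb _ hd)
  have hC_rec : C ⊆ recCone P := fun c hc y hy => hPC (Set.add_mem_add hy hc)
  have hL_rec : L ⊆ recCone P := by rw [hL]; exact fun l hl => hl.1
  have hL_neg : ∀ l ∈ L, -l ∈ L := by
    rw [hL]; rintro l ⟨h1, h2⟩
    exact ⟨by simpa using h2, by simpa using h1⟩
  have hL_smul_nn : ∀ t : ℝ, 0 ≤ t → ∀ x ∈ L, t • x ∈ L := by
    rw [hL]; rintro t ht x ⟨h1, h2⟩
    refine ⟨hrec_smul t ht x h1, ?_⟩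
    rw [Set.mem_neg, ← smul_neg]
    exact hrec_smul t ht _ (Set.mem_neg.mp h2)
  have hL_zero : (0 : Fin q → ℝ) ∈ L := by
    rw [hL]; exact ⟨hrec_zero, by simpa using hrec_zero⟩
  have hL_add : ∀ a ∈ L, ∀ b ∈ L, a + b ∈ L := by
    rw [hL]; rintro a ⟨ha1, ha2⟩ b ⟨hb1, hb2⟩
    refine ⟨hrec_add a ha1 b hb1, ?_⟩
    rw [Set.mem_neg, neg_add]
    exact hrec_add _ (Set.mem_neg.mp ha2) _ (Set.mem_neg.mp hb2)
  -- L as a submodule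
  let L' : Submodule ℝ (Fin q → ℝ) :=
    { carrier := L
      zero_mem' := hL_zero
      add_mem' := fun {a b} ha hb => hL_add a ha b hb
      smul_mem' := by
        intro c x hx
        rcases le_or_gt 0 c with hc | hc
        · exact hL_smul_nn c hc x hx
        · have : c • x = (-c) • (-x) := by rw [smul_neg, neg_smul, neg_neg]
          rw [this]
          exact hL_smul_nn (-c) (by linarith) _ (hL_neg x hx) }
  have hLL' : (L' : Set (Fin q → ℝ)) = L := rfl
  have hcompl : IsCompl L' U := by
    constructor
    · rw [Submodule.disjoint_def]
      intro x hx hxU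
      have hx0 : x ∈ L ∩ (U : Set (Fin q → ℝ)) := ⟨hx, hxU⟩
      rw [hcompl1] at hx0
      exact hx0
    · rw [codisjoint_iff, eq_top_iff]
      intro x _
      have hx : x ∈ L + (U : Set (Fin q → ℝ)) := by rw [hcompl2]; trivial
      rw [Set.mem_add] at hx
      obtain ⟨l, hl, u, hu, h⟩ := hx
      exact Submodule.mem_sup.mpr ⟨l, hl, u, hu, h⟩
  -- the projection onto U along L
  let f := U.projectionOnto L' hcompl.symm
  let πl : (Fin q → ℝ) →ₗ[ℝ] (Fin q → ℝ) := U.subtype ∘ₗ f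
  have hπ_U : ∀ x, πl x ∈ U := fun x => (f x).2
  have hπ_id : ∀ x ∈ U, πl x = x := by
    intro x hx
    show ((f x : U) : Fin q → ℝ) = x
    rw [show f x = f ((⟨x, hx⟩ : U) : Fin q → ℝ) from rfl,
      Submodule.projectionOnto_apply_left hcompl.symm ⟨x, hx⟩]
  have hπ_L : ∀ x, x - πl x ∈ L := by
    intro x
    have h1 : f (πl x) = f x := by
      show f ((f x : U) : Fin q → ℝ) = f x
      rw [Submodule.projectionOnto_apply_left hcompl.symm (f x)]
    have h2 : f (x - πl x) = 0 := by rw [map_sub, h1, sub_self]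
    have h3 : x - πl x ∈ LinearMap.ker f := LinearMap.mem_ker.mpr h2
    rw [Submodule.ker_projectionOnto] at h3
    exact h3
  have hπP : ∀ p ∈ P, πl p ∈ P := by
    intro p hp
    have h1 : πl p - p ∈ L := by
      have := hL_neg _ (hπ_L p)
      simpa using this
    have := hL_rec h1 p hp
    simpa using this
  have hvPU : v ∈ P ∩ (U : Set (Fin q → ℝ)) := hv.1
  have hπv : πl v = v := hπ_id v hvPU.2
  -- midpoint extremality lemma
  have hmid : ∀ a ∈ P ∩ (U : Set (Fin q → ℝ)), ∀ d ∈ recCone P, d ∈ (U : Set (Fin q → ℝ)) →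
      v = a + d → d = 0 := by
    intro a ha d hd hdU hvad
    have hb : a + d + d ∈ P ∩ (U : Set (Fin q → ℝ)) :=
      ⟨hd _ (hd _ ha.1), by rw [add_assoc]; exact U.add_mem ha.2 (U.add_mem hdU hdU)⟩
    have hseg : v ∈ openSegment ℝ a (a + d + d) := by
      refine ⟨1/2, 1/2, by norm_num, by norm_num, by norm_num, ?_⟩
      rw [hvad]; module
    obtain ⟨h1, h2⟩ := (mem_extremePoints.mp hv).2 _ ha _ hb hseg
    have hdd : d + d = 0 := by
      have : a + (d + d) = a := by rw [← add_assoc, h2, ← h1]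
      exact add_left_cancel (this.trans (add_zero a).symm)
    have h2d : (2 : ℝ) • d = 0 := by rw [two_smul]; exact hdd
    have := smul_eq_zero.mp h2d
    rcases this with h | h
    · norm_num at h
    · exact h
  -- decompose v
  have hvP : v ∈ P := hvPU.1
  rw [hP, Set.mem_add] at hvP
  obtain ⟨x, hx, r, hr, hxr⟩ := hvP
  have hπadj : ∀ y, y ∈ recCone P → πl y ∈ recCone P := by
    intro y hy
    have h1 : πl y - y ∈ L := by simpa using hL_neg _ (hπ_L y)
    have := hrec_add y hy _ (hL_rec h1)
    simpa using this
  have hveq : v = πl x + πl r := by rw [← hπv, ← hxr, map_add]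
  have hπx : πl x ∈ P ∩ (U : Set (Fin q → ℝ)) := ⟨hπP x (hVP hx), hπ_U x⟩
  have hπr0 : πl r = 0 := hmid (πl x) hπx (πl r) (hπadj r (hconeR_rec hr)) (hπ_U r) hveq
  have hvx : v = πl x := by rw [hveq, hπr0, add_zero]
  -- Caratheodory-style representation
  rw [convexHull_eq] at hx
  obtain ⟨ι, t, w, z, hw0, hw1, hzV, hcm⟩ := hx
  have hzPU : ∀ i ∈ t, πl (z i) ∈ P ∩ (U : Set (Fin q → ℝ)) := fun i hi =>
    ⟨hπP _ (hVP (subset_convexHull ℝ V (hzV i hi))), hπ_U _⟩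
  have hv_cm : t.centerMass w (πl ∘ z) = v := by
    rw [Finset.centerMass_eq_of_sum_1 _ _ hw1]
    rw [Finset.centerMass_eq_of_sum_1 _ _ hw1] at hcm
    rw [hvx, ← hcm, map_sum]
    simp [Function.comp]
  have hkey : ∃ i ∈ t, w i ≠ 0 ∧ πl (z i) = v := by
    by_contra hcon
    push_neg at hcon
    have hPUconv : Convex ℝ (P ∩ (U : Set (Fin q → ℝ))) := hPconv.inter U.convex
    have hdiff : Convex ℝ ((P ∩ (U : Set (Fin q → ℝ))) \ {v}) :=
      (hPUconv.mem_extremePoints_iff_convex_diff.mp hv).2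
    have hfil : (t.filter fun i => w i ≠ 0).centerMass w (πl ∘ z) = v := by
      rw [Finset.centerMass_filter_ne_zero]; exact hv_cm
    have hmem : v ∈ convexHull ℝ ((P ∩ (U : Set (Fin q → ℝ))) \ {v}) := by
      have h := Finset.centerMass_mem_convexHull (t.filter fun i => w i ≠ 0)
        (fun i hi => hw0 i (Finset.mem_filter.mp hi).1)
        (by rw [Finset.sum_filter_ne_zero, hw1]; exact one_pos)
        (s := (P ∩ (U : Set (Fin q → ℝ))) \ {v}) (z := πl ∘ z)
        (fun i hi => by
          obtain ⟨hit, hwi⟩ := Finset.mem_filter.mp hi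
          simp only [Set.mem_diff, Set.mem_singleton_iff, Function.comp]
          exact ⟨hzPU i hit, hcon i hit hwi⟩)
      rwa [hfil] at h
    rw [hdiff.convexHull_eq] at hmem
    exact hmem.2 rfl
  obtain ⟨i, hit, hwi, hπzi⟩ := hkey
  -- the generator z i is not dominated
  have hnd : z i ∉ P + (C \ {0}) := by
    intro hdom
    rw [Set.mem_add] at hdom
    obtain ⟨p, hp, c, hc, hpc⟩ := hdom
    have hveq2 : v = πl p + πl c := by rw [← hπzi, ← hpc, map_add]
    have hπc0 : πl c = 0 :=
      hmid (πl p) ⟨hπP p hp, hπ_U p⟩ (πl c) (hπadj c (hC_rec hc.1)) (hπ_U c) hveq2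
    have hcL : c ∈ L := by
      have := hπ_L c
      rw [hπc0, sub_zero] at this
      exact this
    have : c ∈ L ∩ C := ⟨hcL, hc.1⟩
    rw [hLC] at this
    exact hc.2 this
  -- conclude
  have hlm : v - z i ∈ L := by
    have := hL_neg _ (hπ_L (z i))
    rw [← hπzi]
    simpa using this
  exact Set.mem_add.mpr ⟨z i, ⟨hzV i hit, hnd⟩, v - z i, hlm, by abel⟩
end

section
/- Consider a vector linear program (VLP): minimize Px over S = {x : Ax ≥ b} with ordering cone C = {y ∈ ℝ^q : Z^T y ≥ 0}, where ker Z^T = {0}. Let 𝒫 = P[S] + C be the upper image and L its lineality space. If L ∩ C ≠ {0}, then the VLP has no solution; in fact no feasible point x is a minimizer. -/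
open Pointwise Set

/-- `(Spoi, Sdir)` is a solution of the VLP `min Px s.t. Ax ≥ b` w.r.t. the
ordering cone `C`: a finite infimizer consisting only of minimizers. -/
def IsVLPSolution {m n q : ℕ} (A : Matrix (Fin m) (Fin n) ℝ) (b : Fin m → ℝ)
    (P : Matrix (Fin q) (Fin n) ℝ) (C : Set (Fin q → ℝ))
    (Spoi Sdir : Set (Fin n → ℝ)) : Prop :=
  Spoi.Finite ∧ Sdir.Finite ∧ Spoi.Nonempty ∧
  -- feasibility
  (∀ x ∈ Spoi, ∀ i, b i ≤ A.mulVec x i) ∧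
  (∀ x ∈ Sdir, x ≠ 0 ∧ ∀ i, (0:ℝ) ≤ A.mulVec x i) ∧
  -- minimizers
  (∀ x ∈ Spoi,
    P.mulVec x ∉ (P.mulVec '' {z | ∀ i, b i ≤ A.mulVec z i}) + (C \ {0})) ∧
  (∀ x ∈ Sdir,
    P.mulVec x ∉ (P.mulVec '' {z | ∀ i, (0:ℝ) ≤ A.mulVec z i}) + (C \ {0})) ∧
  -- finite infimizer
  convexHull ℝ (P.mulVec '' Spoi) + coneOf (P.mulVec '' Sdir) + C =
    (P.mulVec '' {z | ∀ i, b i ≤ A.mulVec z i}) + C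

theorem no_solution_if_lineality_meets_cone
    (m n q r : ℕ) (A : Matrix (Fin m) (Fin n) ℝ) (b : Fin m → ℝ)
    (P : Matrix (Fin q) (Fin n) ℝ) (Z : Matrix (Fin q) (Fin r) ℝ)
    (hker : ∀ y : Fin q → ℝ, Z.transpose.mulVec y = 0 → y = 0)
    (C : Set (Fin q → ℝ)) (hC : C = {y | ∀ j, 0 ≤ Z.transpose.mulVec y j})
    (S : Set (Fin n → ℝ)) (hS : S = {x | ∀ i, b i ≤ A.mulVec x i})
    (UI : Set (Fin q → ℝ)) (hUI : UI = (P.mulVec '' S) + C)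
    (L : Set (Fin q → ℝ)) (hL : L = recCone UI ∩ (-recCone UI))
    (hLC : L ∩ C ≠ {0}) :
    (∀ x ∈ S, P.mulVec x ∈ (P.mulVec '' S) + (C \ {0})) ∧
    ¬ ∃ Spoi Sdir : Set (Fin n → ℝ), IsVLPSolution A b P C Spoi Sdir := by

  have h0C : (0 : Fin q → ℝ) ∈ C := by
    rw [hC]; intro j; simp [Matrix.mulVec_zero]
  have h0L : (0 : Fin q → ℝ) ∈ L := by
    rw [hL]
    constructor
    · intro y hy; simpa using hy
    · rw [Set.mem_neg]; intro y hy; simpa using hy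
  obtain ⟨d, hdLC, hd0⟩ : ∃ d ∈ L ∩ C, d ≠ 0 := by
    by_contra h
    push_neg at h
    apply hLC
    ext y
    constructor
    · intro hy; exact h y hy
    · rintro rfl; exact ⟨h0L, h0C⟩
  obtain ⟨hdL, hdC⟩ := hdLC
  rw [hL] at hdL
  have hnd : -d ∈ recCone UI := by
    have := hdL.2; rwa [Set.mem_neg] at this
  -- key claim
  have key : ∀ x ∈ S, P.mulVec x ∈ (P.mulVec '' S) + (C \ {0}) := by
    intro x hx
    have hPx : P.mulVec x ∈ UI := by
      rw [hUI]
      exact ⟨P.mulVec x, ⟨x, hx, rfl⟩, 0, h0C, by simp⟩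
    have h2 : P.mulVec x + (-d) ∈ UI := hnd _ hPx
    rw [hUI] at h2
    obtain ⟨p, ⟨y, hy, rfl⟩, c, hc, heq⟩ := h2
    refine ⟨P.mulVec y, ⟨y, hy, rfl⟩, c + d, ⟨?_, ?_⟩, ?_⟩
    · rw [hC] at hdC hc ⊢
      intro j
      have h1 := hc j
      have h2 := hdC j
      rw [Matrix.mulVec_add]
      exact add_nonneg h1 h2
    · intro hcd
      simp only [Set.mem_singleton_iff] at hcd
      have hcd' : c = -d := eq_neg_of_add_eq_zero_left hcd
      rw [hC] at hc hdC
      apply hd0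
      apply hker
      funext j
      have h1 := hc j
      have h2 := hdC j
      rw [hcd', Matrix.mulVec_neg] at h1
      have h3 : Z.transpose.mulVec d j ≤ 0 := by
        simpa [neg_nonneg] using h1
      have : Z.transpose.mulVec d j = 0 := le_antisymm h3 h2
      simpa using this
    · have : P.mulVec y + c = P.mulVec x + (-d) := heq
      have := congrArg (· + d) this
      simpa [add_assoc] using this
  refine ⟨key, ?_⟩
  rintro ⟨Spoi, Sdir, hfin, _, ⟨x, hx⟩, hfeas, _, hmin, _⟩
  have hxS : x ∈ S := by rw [hS]; exact hfeas x hx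
  have := key x hxS
  rw [hS] at this
  exact hmin x hx this
end

section
/- Let a feasible VLP (minimize Px subject to Ax ≥ b, ordering cone C = {y : Z^T y ≥ 0} with ker Z^T = {0}) have upper image 𝒫 = P[S] + C with lineality space L satisfying L ∩ C = {0}. Let (X_poi, X_dir) be a solution of the associated polyhedral projection problem computing 𝒫 = {y : ∃x, Z^T y ≥ Z^T P x, Ax ≥ b}. Define S_poi = {x : (x,y) ∈ X_poi, y ∉ 𝒫 + C\{0}} and S_dir = {x : (x,y) ∈ X_dir, y ∉ 0⁺𝒫 + C\{0}}. Then (S_poi, S_dir) is a solution of the VLP. -/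
open Pointwise Set

section ConeBasic

variable {q : ℕ}

lemma coneOf_zero_mem (B : Set (Fin q → ℝ)) : (0 : Fin q → ℝ) ∈ coneOf B :=
  Set.mem_insert _ _

lemma smul_mem_coneOf {B : Set (Fin q → ℝ)} {l : ℝ} {b : Fin q → ℝ}
    (hl : 0 ≤ l) (hb : b ∈ convexHull ℝ B) : l • b ∈ coneOf B :=
  Set.mem_insert_of_mem _ ⟨l, hl, b, hb, rfl⟩

lemma mem_coneOf_self {B : Set (Fin q → ℝ)} {b : Fin q → ℝ} (hb : b ∈ B) : b ∈ coneOf B := by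
  have := smul_mem_coneOf (zero_le_one) (subset_convexHull ℝ B hb)
  simpa using this

lemma coneOf_add {B : Set (Fin q → ℝ)} {x y : Fin q → ℝ} (hx : x ∈ coneOf B)
    (hy : y ∈ coneOf B) : x + y ∈ coneOf B := by
  rcases Set.mem_insert_iff.mp hx with rfl | ⟨l, hl, b, hb, rfl⟩
  · simpa using hy
  rcases Set.mem_insert_iff.mp hy with rfl | ⟨m, hm, c, hc, rfl⟩
  · simpa using smul_mem_coneOf hl hb
  rcases eq_or_lt_of_le (add_nonneg hl hm) with h0 | hpos
  · have hl0 : l = 0 := by linarith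
    have hm0 : m = 0 := by linarith
    simp [hl0, hm0, coneOf_zero_mem]
  · have hne : l + m ≠ 0 := ne_of_gt hpos
    have h1 : l / (l + m) + m / (l + m) = 1 := by field_simp
    have hcomb : (l/(l+m)) • b + (m/(l+m)) • c ∈ convexHull ℝ B :=
      (convex_convexHull ℝ B) hb hc (by positivity) (by positivity) h1
    have hmem := smul_mem_coneOf (le_of_lt hpos) hcomb
    convert hmem using 1
    rw [smul_add, smul_smul, smul_smul]
    congr 1 <;> · congr 1; field_simp

lemma coneOf_smul {B : Set (Fin q → ℝ)} {t : ℝ} {x : Fin q → ℝ} (ht : 0 ≤ t)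
    (hx : x ∈ coneOf B) : t • x ∈ coneOf B := by
  rcases Set.mem_insert_iff.mp hx with rfl | ⟨l, hl, b, hb, rfl⟩
  · simpa using coneOf_zero_mem B
  · rw [smul_smul]; exact smul_mem_coneOf (mul_nonneg ht hl) hb

lemma coneOf_subset {B K : Set (Fin q → ℝ)} (hBK : B ⊆ K) (h0 : (0:Fin q → ℝ) ∈ K)
    (hadd : ∀ x ∈ K, ∀ y ∈ K, x + y ∈ K) (hsmul : ∀ t : ℝ, 0 ≤ t → ∀ x ∈ K, t • x ∈ K) :
    coneOf B ⊆ K := by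
  have hconv : Convex ℝ K := by
    intro x hx y hy a c ha hc _
    exact hadd _ (hsmul a ha x hx) _ (hsmul c hc y hy)
  have hch : convexHull ℝ B ⊆ K := convexHull_min hBK hconv
  intro x hx
  rcases Set.mem_insert_iff.mp hx with rfl | ⟨l, hl, b, hb, rfl⟩
  · exact h0
  · exact hsmul l hl b (hch hb)

lemma coneOf_mono {B B' : Set (Fin q → ℝ)} (h : B ⊆ B') : coneOf B ⊆ coneOf B' := by
  intro x hx
  rcases Set.mem_insert_iff.mp hx with rfl | ⟨l, hl, b, hb, rfl⟩
  · exact coneOf_zero_mem _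
  · exact smul_mem_coneOf hl (convexHull_mono h hb)

lemma coneOf_insert_decomp {d1 : Fin q → ℝ} {B : Set (Fin q → ℝ)} {x : Fin q → ℝ}
    (hx : x ∈ coneOf (insert d1 B)) :
    ∃ μ : ℝ, 0 ≤ μ ∧ ∃ e ∈ coneOf B, x = μ • d1 + e := by
  rcases Set.mem_insert_iff.mp hx with rfl | ⟨l, hl, p, hp, rfl⟩
  · exact ⟨0, le_rfl, 0, coneOf_zero_mem B, by simp⟩
  rcases B.eq_empty_or_nonempty with rfl | hBne
  · have : insert d1 (∅ : Set (Fin q → ℝ)) = {d1} := by simp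
    rw [this, convexHull_singleton] at hp
    rw [Set.mem_singleton_iff] at hp
    subst hp
    exact ⟨l, hl, 0, coneOf_zero_mem _, by simp⟩
  · rw [convexHull_insert hBne, mem_convexJoin] at hp
    obtain ⟨a, ha, z, hz, hseg⟩ := hp
    rw [Set.mem_singleton_iff] at ha
    subst ha
    obtain ⟨α, β, hα, hβ, hαβ, rfl⟩ := hseg
    refine ⟨l * α, mul_nonneg hl hα, (l*β) • z, smul_mem_coneOf (mul_nonneg hl hβ) hz, ?_⟩
    rw [smul_add, smul_smul, smul_smul]

lemma mem_coneOf_finset {t : Finset (Fin q → ℝ)} {x : Fin q → ℝ} :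
    x ∈ coneOf (↑t : Set (Fin q → ℝ)) ↔
      ∃ w : (Fin q → ℝ) → ℝ, (∀ d ∈ t, 0 ≤ w d) ∧ x = ∑ d ∈ t, w d • d := by
  constructor
  · intro hx
    rcases Set.mem_insert_iff.mp hx with rfl | ⟨l, hl, b, hb, rfl⟩
    · exact ⟨fun _ => 0, fun _ _ => le_rfl, by simp⟩
    · rw [Finset.convexHull_eq] at hb
      obtain ⟨w, hw0, hw1, hcm⟩ := hb
      refine ⟨fun d => l * w d, fun d hd => mul_nonneg hl (hw0 d hd), ?_⟩
      rw [← hcm, Finset.centerMass_eq_of_sum_1 _ _ hw1, Finset.smul_sum]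
      simp [smul_smul]
  · rintro ⟨w, hw0, rfl⟩
    by_cases hzero : ∀ d ∈ t, w d = 0
    · have hz : ∑ d ∈ t, w d • d = 0 :=
        Finset.sum_eq_zero (fun d hd => by rw [hzero d hd, zero_smul])
      rw [hz]; exact coneOf_zero_mem _
    · have hspos : 0 < ∑ d ∈ t, w d := by
        push_neg at hzero
        obtain ⟨d0, hd0, hne⟩ := hzero
        exact Finset.sum_pos' (fun i hi => hw0 i hi)
          ⟨d0, hd0, lt_of_le_of_ne (hw0 d0 hd0) (Ne.symm hne)⟩
      have hcm : t.centerMass w id ∈ convexHull ℝ (↑t : Set (Fin q → ℝ)) :=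
        t.centerMass_mem_convexHull hw0 hspos (fun i hi => Finset.mem_coe.mpr hi)
      have hmem := smul_mem_coneOf (le_of_lt hspos) hcm
      convert hmem using 1
      rw [Finset.centerMass, smul_inv_smul₀ (ne_of_gt hspos)]
      simp

end ConeBasic
section Closedness

variable {q : ℕ}

lemma caratheodory_cone (t : Finset (Fin q → ℝ)) :
    ∀ w : (Fin q → ℝ) → ℝ, (∀ d ∈ t, 0 ≤ w d) →
      ∃ s : Finset (Fin q → ℝ), s ⊆ t ∧
        (LinearIndependent ℝ (fun i : ↥s => (i : Fin q → ℝ))) ∧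
        ∃ w' : (Fin q → ℝ) → ℝ, (∀ d ∈ s, 0 ≤ w' d) ∧
          ∑ d ∈ s, w' d • d = ∑ d ∈ t, w d • d := by
  classical
  induction t using Finset.strongInductionOn with
  | _ t ih =>
    intro w hw
    by_cases hli : LinearIndependent ℝ (fun i : ↥t => (i : Fin q → ℝ))
    · exact ⟨t, Finset.Subset.refl t, hli, w, hw, rfl⟩
    · obtain ⟨g, hgsum, i₀, hgi₀⟩ := Fintype.not_linearIndependent_iff.mp hli
      set g' : (Fin q → ℝ) → ℝ := fun e => if h : e ∈ t then g ⟨e, h⟩ else 0 with hg'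
      have hg'sum : ∑ d ∈ t, g' d • d = 0 := by
        rw [← Finset.sum_attach t (fun d => g' d • d)]
        rw [← hgsum, Finset.sum_coe_sort_eq_attach]
        apply Finset.sum_congr rfl
        intro i _
        simp [hg', i.2]
      have hg'ne : ∃ d ∈ t, g' d ≠ 0 := ⟨(i₀ : Fin q → ℝ), i₀.2, by simp [hg', i₀.2, hgi₀]⟩
      -- make sure there is a positive coefficient
      set g'' : (Fin q → ℝ) → ℝ := if H : ∃ d ∈ t, 0 < g' d then g' else -g' with hg''
      have hg''sum : ∑ d ∈ t, g'' d • d = 0 := by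
        by_cases H : ∃ d ∈ t, 0 < g' d
        · rw [hg'']; rw [dif_pos H]; exact hg'sum
        · rw [hg'']; rw [dif_neg H]
          simp only [Pi.neg_apply, neg_smul]
          rw [Finset.sum_neg_distrib, hg'sum, neg_zero]
      have hg''pos : ∃ d ∈ t, 0 < g'' d := by
        by_cases H : ∃ d ∈ t, 0 < g' d
        · rw [hg'']; rw [dif_pos H]; exact H
        · obtain ⟨d, hd, hdne⟩ := hg'ne
          push_neg at H
          refine ⟨d, hd, ?_⟩
          rw [hg'', dif_neg]
          · simp only [Pi.neg_apply]
            have := H d hd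
            cases lt_or_eq_of_le this with
            | inl h => linarith
            | inr h => exact absurd h hdne
          · push_neg; exact H
      obtain ⟨dpos, hdposmem, hdpos⟩ := hg''pos
      set tp := t.filter (fun d => 0 < g'' d) with htp
      have htpne : tp.Nonempty := ⟨dpos, Finset.mem_filter.mpr ⟨hdposmem, hdpos⟩⟩
      obtain ⟨d0, hd0mem, hd0min⟩ := Finset.exists_min_image tp (fun d => w d / g'' d) htpne
      have hd0t : d0 ∈ t := (Finset.mem_filter.mp hd0mem).1
      have hd0pos : 0 < g'' d0 := (Finset.mem_filter.mp hd0mem).2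
      set θ := w d0 / g'' d0 with hθdef
      have hθ : 0 ≤ θ := div_nonneg (hw d0 hd0t) (le_of_lt hd0pos)
      set w' : (Fin q → ℝ) → ℝ := fun e => w e - θ * g'' e with hw'def
      have hw' : ∀ d ∈ t, 0 ≤ w' d := by
        intro d hd
        by_cases hgd : 0 < g'' d
        · have hmin : θ ≤ w d / g'' d := hd0min d (Finset.mem_filter.mpr ⟨hd, hgd⟩)
          have : θ * g'' d ≤ w d := by
            rw [le_div_iff₀ hgd] at hmin; linarith
          simp only [hw'def]; linarith
        · push_neg at hgd
          have : θ * g'' d ≤ 0 := mul_nonpos_of_nonneg_of_nonpos hθ hgd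
          have hwd := hw d hd
          simp only [hw'def]; linarith
      have hsum' : ∑ d ∈ t, w' d • d = ∑ d ∈ t, w d • d := by
        simp only [hw'def, sub_smul, Finset.sum_sub_distrib]
        have : ∑ d ∈ t, (θ * g'' d) • d = θ • ∑ d ∈ t, g'' d • d := by
          rw [Finset.smul_sum]
          exact Finset.sum_congr rfl (fun d _ => by rw [smul_smul])
        rw [this, hg''sum, smul_zero, sub_zero]
      have hw'd0 : w' d0 • d0 = 0 := by
        have : w' d0 = 0 := by
          simp only [hw'def, hθdef]
          field_simp
          ring
        rw [this, zero_smul]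
      have herase : ∑ d ∈ t.erase d0, w' d • d = ∑ d ∈ t, w' d • d :=
        Finset.sum_erase _ hw'd0
      obtain ⟨s, hs_sub, hs_li, w'', hw''0, hw''sum⟩ :=
        ih (t.erase d0) (Finset.erase_ssubset hd0t) w' (fun d hd => hw' d (Finset.mem_of_mem_erase hd))
      exact ⟨s, hs_sub.trans (Finset.erase_subset d0 t), hs_li, w'', hw''0, by
        rw [hw''sum, herase, hsum']⟩

lemma isClosed_linIndep_piece (s : Finset (Fin q → ℝ))
    (hli : LinearIndependent ℝ (fun i : ↥s => (i : Fin q → ℝ))) :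
    IsClosed {x : Fin q → ℝ | ∃ w : (Fin q → ℝ) → ℝ,
      (∀ d ∈ s, 0 ≤ w d) ∧ x = ∑ d ∈ s, w d • d} := by
  classical
  set f : (↥s → ℝ) →ₗ[ℝ] (Fin q → ℝ) :=
    { toFun := fun w => ∑ i : ↥s, w i • (i : Fin q → ℝ)
      map_add' := by
        intro a b
        simp [add_smul, Finset.sum_add_distrib]
      map_smul' := by
        intro c a
        simp [mul_smul, Finset.smul_sum] } with hf
  have hker : LinearMap.ker f = ⊥ := by
    rw [LinearMap.ker_eq_bot']
    intro w hw
    funext i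
    exact Fintype.linearIndependent_iff.mp hli w hw i
  have hemb := LinearMap.isClosedEmbedding_of_injective hker
  have hclosed : IsClosed {w : ↥s → ℝ | ∀ i, 0 ≤ w i} := by
    have : {w : ↥s → ℝ | ∀ i, 0 ≤ w i} = ⋂ i, {w | 0 ≤ w i} := by
      ext w; simp [Set.mem_iInter]
    rw [this]
    exact isClosed_iInter (fun i => isClosed_le continuous_const (continuous_apply i))
  have himg := hemb.isClosedMap _ hclosed
  convert himg using 1
  ext x
  constructor
  · rintro ⟨w, hw0, rfl⟩
    refine ⟨fun i => w (i : Fin q → ℝ), fun i => hw0 _ i.2, ?_⟩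
    show ∑ i : ↥s, w (i : Fin q → ℝ) • (i : Fin q → ℝ) = _
    rw [Finset.sum_coe_sort s (fun d => w d • d)]
  · rintro ⟨w, hw0, rfl⟩
    refine ⟨fun e => if h : e ∈ s then w ⟨e, h⟩ else 0, fun d hd => by simp [hd]; exact hw0 _, ?_⟩
    show _ = ∑ d ∈ s, (if h : d ∈ s then w ⟨d, h⟩ else 0) • d
    rw [← Finset.sum_coe_sort s (fun d => (if h : d ∈ s then w ⟨d, h⟩ else 0) • d)]
    apply Finset.sum_congr rfl
    intro i _
    simp [i.2]

lemma isClosed_coneOf_finset (t : Finset (Fin q → ℝ)) :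
    IsClosed (coneOf (↑t : Set (Fin q → ℝ))) := by
  classical
  have heq : coneOf (↑t : Set (Fin q → ℝ)) =
      ⋃ s ∈ {s : Finset (Fin q → ℝ) | s ⊆ t ∧
        LinearIndependent ℝ (fun i : ↥s => (i : Fin q → ℝ))},
        {x : Fin q → ℝ | ∃ w : (Fin q → ℝ) → ℝ,
          (∀ d ∈ s, 0 ≤ w d) ∧ x = ∑ d ∈ s, w d • d} := by
    ext x
    simp only [Set.mem_iUnion, Set.mem_setOf_eq]
    constructor
    · intro hx
      obtain ⟨w, hw0, rfl⟩ := mem_coneOf_finset.mp hx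
      obtain ⟨s, hsub, hli, w', hw'0, hsum⟩ := caratheodory_cone t w hw0
      exact ⟨s, ⟨hsub, hli⟩, w', hw'0, hsum.symm⟩
    · rintro ⟨s, ⟨hsub, _⟩, w, hw0, rfl⟩
      apply mem_coneOf_finset.mpr
      refine ⟨fun e => if e ∈ s then w e else 0, ?_, ?_⟩
      · intro d hd
        by_cases h : d ∈ s
        · simp [h]; exact hw0 d h
        · simp [h]
      · rw [← Finset.sum_subset hsub (fun x _ hxs => by simp [hxs])]
        apply Finset.sum_congr rfl
        intro d hd
        simp [hd]
  rw [heq]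
  apply Set.Finite.isClosed_biUnion
  · apply Set.Finite.subset (Finset.finite_toSet t.powerset)
    intro s hs
    simpa using hs.1
  · intro s hs
    exact isClosed_linIndep_piece s hs.2

lemma isClosed_coneOf_of_finite {B : Set (Fin q → ℝ)} (hB : B.Finite) :
    IsClosed (coneOf B) := by
  have : B = ↑hB.toFinset := by simp
  rw [this]
  exact isClosed_coneOf_finset _

end Closedness
section Elimination

variable {q : ℕ}

lemma mem_add3 {s t u : Set (Fin q → ℝ)} {x : Fin q → ℝ} :
    x ∈ s + t + u ↔ ∃ a ∈ s, ∃ b ∈ t, ∃ c ∈ u, a + b + c = x := by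
  constructor
  · intro h
    obtain ⟨ab, hab, c, hc, h1⟩ := Set.mem_add.mp h
    obtain ⟨a, ha, b, hb, h2⟩ := Set.mem_add.mp hab
    exact ⟨a, ha, b, hb, c, hc, by rw [← h1, ← h2]⟩
  · rintro ⟨a, ha, b, hb, c, hc, rfl⟩
    exact Set.mem_add.mpr ⟨a + b, Set.mem_add.mpr ⟨a, ha, b, hb, rfl⟩, c, hc, rfl⟩

lemma recCone_subset_coneOf {Y D : Set (Fin q → ℝ)} (hYne : Y.Nonempty) (hYfin : Y.Finite)
    (hDfin : D.Finite) :
    recCone (convexHull ℝ Y + coneOf D) ⊆ coneOf D := by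
  intro r hr
  obtain ⟨y0, hy0⟩ := hYne
  have hy0U : y0 ∈ convexHull ℝ Y + coneOf D :=
    Set.mem_add.mpr ⟨y0, subset_convexHull ℝ Y hy0, 0, coneOf_zero_mem D, by simp⟩
  have hseq : ∀ n : ℕ, y0 + ((n:ℝ)+1) • r ∈ convexHull ℝ Y + coneOf D := by
    intro n
    induction n with
    | zero => simpa using hr y0 hy0U
    | succ n ihn =>
      have h2 : y0 + ((((n+1) : ℕ):ℝ)+1) • r = (y0 + ((n:ℝ)+1) • r) + r := by
        push_cast
        rw [show ((n:ℝ) + 1 + 1) = ((n:ℝ)+1) + 1 by ring, add_smul, one_smul]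
        abel
      rw [h2]
      exact hr _ ihn
  have hchoice : ∀ n : ℕ, ∃ p ∈ convexHull ℝ Y, ∃ mm ∈ coneOf D,
      y0 + ((n:ℝ)+1) • r = p + mm := by
    intro n
    obtain ⟨p, hp, mm, hmm, h⟩ := Set.mem_add.mp (hseq n)
    exact ⟨p, hp, mm, hmm, h.symm⟩
  choose p hp mm hmm hpm using hchoice
  obtain ⟨R, hR⟩ := (Bornology.IsBounded.exists_norm_le
    (hYfin.isCompact_convexHull (𝕜 := ℝ)).isBounded)
  set a : ℕ → (Fin q → ℝ) := fun n => ((n:ℝ)+1)⁻¹ • mm n with ha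
  have haM : ∀ n, a n ∈ coneOf D := fun n => coneOf_smul (by positivity) (hmm n)
  have hcalc : ∀ n, a n - r = ((n:ℝ)+1)⁻¹ • (y0 - p n) := by
    intro n
    have hn : ((n:ℝ)+1) ≠ 0 := by positivity
    have hmn : mm n = y0 + ((n:ℝ)+1) • r - p n := by rw [hpm n]; abel
    rw [ha]
    show ((n:ℝ)+1)⁻¹ • mm n - r = _
    rw [hmn, smul_sub, smul_add, smul_smul, inv_mul_cancel₀ hn, one_smul]
    rw [smul_sub]
    abel
  have hbound : ∀ n, ‖a n - r‖ ≤ (‖y0‖ + R) / ((n:ℝ)+1) := by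
    intro n
    rw [hcalc n, norm_smul]
    have hn : (0:ℝ) < (n:ℝ)+1 := by positivity
    rw [Real.norm_eq_abs, abs_inv, abs_of_pos hn]
    rw [div_eq_inv_mul]
    apply mul_le_mul_of_nonneg_left _ (by positivity)
    calc ‖y0 - p n‖ ≤ ‖y0‖ + ‖p n‖ := norm_sub_le _ _
    _ ≤ ‖y0‖ + R := by have := hR _ (hp n); linarith
  have htend0 : Filter.Tendsto (fun n : ℕ => (‖y0‖ + R) / ((n:ℝ)+1)) Filter.atTop (nhds 0) := by
    have h1 := (tendsto_const_div_atTop_nhds_zero_nat (‖y0‖ + R)).comp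
      (Filter.tendsto_add_atTop_nat 1)
    have heqf : (fun n : ℕ => (‖y0‖ + R) / ((n:ℝ)+1)) =
        (fun n : ℕ => (‖y0‖ + R) / (((n+1):ℕ):ℝ)) := by
      funext n; push_cast; ring_nf
    rw [heqf]; exact h1
  have htends : Filter.Tendsto (fun n => a n - r) Filter.atTop (nhds 0) :=
    squeeze_zero_norm hbound htend0
  have htenda : Filter.Tendsto a Filter.atTop (nhds r) := by
    rwa [tendsto_sub_nhds_zero_iff] at htends
  exact (isClosed_coneOf_of_finite hDfin).mem_of_tendsto htenda
    (Filter.Eventually.of_forall haM)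

lemma dir_elimination (M C Dg : Set (Fin q → ℝ))
    (hCadd : ∀ c1 ∈ C, ∀ c2 ∈ C, c1 + c2 ∈ C)
    (hCsmul : ∀ t : ℝ, 0 ≤ t → ∀ c ∈ C, t • c ∈ C)
    (hMadd : ∀ x ∈ M, ∀ y ∈ M, x + y ∈ M)
    (hMsmul : ∀ t : ℝ, 0 ≤ t → ∀ x ∈ M, t • x ∈ M)
    (hM0 : (0 : Fin q → ℝ) ∈ M)
    (hMC : ∀ x ∈ M, -x ∈ C → x = 0)
    (hCM : C ⊆ M)
    (hDgM : Dg ⊆ M) :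
    ∀ B : Finset (Fin q → ℝ), (↑B : Set (Fin q → ℝ)) ⊆ M →
      (∀ d ∈ B, d ∈ M + (C \ {0})) →
      M ⊆ coneOf (Dg ∪ ↑B) + C → M ⊆ coneOf Dg + C := by
  classical
  intro B
  induction B using Finset.induction_on with
  | empty => intro _ _ h; simpa using h
  | @insert b B hbB ihB =>
    intro hBM hbad hMsub
    have hBM' : (↑B : Set (Fin q → ℝ)) ⊆ M := fun d hd => hBM (by simp [hd])
    have hbad' : ∀ d ∈ B, d ∈ M + (C \ {0}) :=
      fun d hd => hbad d (Finset.mem_insert_of_mem hd)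
    by_cases hbmem : b ∈ Dg ∪ (↑B : Set (Fin q → ℝ))
    · have hins2 : Dg ∪ (↑(insert b B) : Set (Fin q → ℝ)) = Dg ∪ ↑B := by
        rw [Finset.coe_insert, Set.union_insert, Set.insert_eq_self.mpr hbmem]
      rw [hins2] at hMsub
      exact ihB hBM' hbad' hMsub
    · have hins : Dg ∪ (↑(insert b B) : Set (Fin q → ℝ)) =
          insert b (Dg ∪ (↑B : Set (Fin q → ℝ))) := by
        rw [Finset.coe_insert, Set.union_insert]
      rw [hins] at hMsub
      have hsubM : coneOf (Dg ∪ (↑B : Set (Fin q → ℝ))) ⊆ M :=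
        coneOf_subset (Set.union_subset hDgM hBM') hM0 hMadd hMsmul
      have hbM : b ∈ M := hBM (by simp)
      obtain ⟨rr, hrM, c, hc, hbrc⟩ := Set.mem_add.mp (hbad b (Finset.mem_insert_self b B))
      obtain ⟨wv, hwv, c', hc', hrwc⟩ := Set.mem_add.mp (hMsub hrM)
      obtain ⟨μ, hμ, e, he, hwve⟩ := coneOf_insert_decomp hwv
      have heM : e ∈ M := hsubM he
      have hcc : c' + c ∈ C := hCadd c' hc' c hc.1
      have hccne : c' + c ≠ 0 := by
        intro h0
        have hmc : -c = c' := neg_eq_of_add_eq_zero_left h0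
        have : c = 0 := hMC c (hCM hc.1) (by rw [hmc]; exact hc')
        exact hc.2 this
      -- b = μ•b + e + c' + c
      have hexp : b = ((μ • b + e) + c') + c := by
        have h : b = rr + c := hbrc.symm
        rw [← hrwc, hwve] at h
        exact h
      have hkey : (1 - μ) • b = e + (c' + c) := by
        have h3 : (1 - μ) • b = b - μ • b := by rw [sub_smul, one_smul]
        rw [h3]
        nth_rewrite 1 [hexp]
        abel
      by_cases hμ1 : μ < 1
      · -- good case: b ∈ coneOf (Dg ∪ ↑B) + C
        have hpos : (0:ℝ) < 1 - μ := by linarith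
        have hbval : b = (1-μ)⁻¹ • (e + (c' + c)) := by
          rw [← hkey, smul_smul, inv_mul_cancel₀ (ne_of_gt hpos), one_smul]
        have hb' : b ∈ coneOf (Dg ∪ (↑B : Set (Fin q → ℝ))) + C := by
          refine Set.mem_add.mpr ⟨(1-μ)⁻¹ • e, coneOf_smul (le_of_lt (inv_pos.mpr hpos)) he,
            (1-μ)⁻¹ • (c' + c), hCsmul _ (le_of_lt (inv_pos.mpr hpos)) _ hcc, ?_⟩
          rw [hbval]
          simp only [smul_add]
        have hstep : M ⊆ coneOf (Dg ∪ (↑B : Set (Fin q → ℝ))) + C := by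
          intro mx hmx
          obtain ⟨wv2, hwv2, c2, hc2, heq2⟩ := Set.mem_add.mp (hMsub hmx)
          obtain ⟨μ2, hμ2, e2, he2, hwv2eq⟩ := coneOf_insert_decomp hwv2
          obtain ⟨eb, hebK, cb, hcbC, hbeq⟩ := Set.mem_add.mp hb'
          refine Set.mem_add.mpr ⟨μ2 • eb + e2, coneOf_add (coneOf_smul hμ2 hebK) he2,
            μ2 • cb + c2, hCadd _ (hCsmul _ hμ2 _ hcbC) _ hc2, ?_⟩
          rw [← heq2, hwv2eq, ← hbeq, smul_add]
          abel
        exact ihB hBM' hbad' hstep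
      · -- contradiction case: μ ≥ 1
        exfalso
        push_neg at hμ1
        have hmcc : -(c' + c) = (μ - 1) • b + e := by
          have h : c' + c = (1 - μ) • b - e := by rw [hkey]; abel
          rw [h, neg_sub, sub_smul, sub_smul, one_smul]
          abel
        have hmccM : -(c' + c) ∈ M := by
          rw [hmcc]
          exact hMadd _ (hMsmul _ (by linarith) b hbM) _ heM
        have : -(c' + c) = 0 := hMC _ hmccM (by rw [neg_neg]; exact hcc)
        exact hccne (by rw [← neg_neg (c' + c), this, neg_zero])

lemma point_elimination (UI K C G : Set (Fin q → ℝ))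
    (hCadd : ∀ c1 ∈ C, ∀ c2 ∈ C, c1 + c2 ∈ C)
    (hCsmul : ∀ t : ℝ, 0 ≤ t → ∀ c ∈ C, t • c ∈ C)
    (hCp : ∀ c ∈ C, -c ∈ C → c = 0)
    (hKadd : ∀ x ∈ K, ∀ y ∈ K, x + y ∈ K)
    (hKsmul : ∀ t : ℝ, 0 ≤ t → ∀ x ∈ K, t • x ∈ K)
    (hKC : ∀ x ∈ K, -x ∈ C → x = 0)
    (hGne : G.Nonempty) :
    ∀ B : Finset (Fin q → ℝ),
      (∀ y ∈ B, y ∈ UI + (C \ {0})) →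
      UI ⊆ convexHull ℝ (G ∪ ↑B) + K + C → UI ⊆ convexHull ℝ G + K + C := by
  classical
  intro B
  induction B using Finset.induction_on with
  | empty => intro _ h; simpa using h
  | @insert b B hbB ihB =>
    intro hbad hUIsub
    have hbad' : ∀ y ∈ B, y ∈ UI + (C \ {0}) :=
      fun y hy => hbad y (Finset.mem_insert_of_mem hy)
    by_cases hbmem : b ∈ G ∪ (↑B : Set (Fin q → ℝ))
    · have hins2 : G ∪ (↑(insert b B) : Set (Fin q → ℝ)) = G ∪ ↑B := by
        rw [Finset.coe_insert, Set.union_insert, Set.insert_eq_self.mpr hbmem]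
      rw [hins2] at hUIsub
      exact ihB hbad' hUIsub
    · have hins : G ∪ (↑(insert b B) : Set (Fin q → ℝ)) =
          insert b (G ∪ (↑B : Set (Fin q → ℝ))) := by
        rw [Finset.coe_insert, Set.union_insert]
      rw [hins] at hUIsub
      have hGBne : (G ∪ (↑B : Set (Fin q → ℝ))).Nonempty := hGne.mono Set.subset_union_left
      -- b is bad: b = u + c
      obtain ⟨u, hu, c, hc, hbuc⟩ := Set.mem_add.mp (hbad b (Finset.mem_insert_self b B))
      obtain ⟨p, hpconv, k, hk, c', hc', heq⟩ := mem_add3.mp (hUIsub hu)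
      rw [convexHull_insert hGBne, mem_convexJoin] at hpconv
      obtain ⟨a, ha, z, hz, hseg⟩ := hpconv
      rw [Set.mem_singleton_iff] at ha
      obtain ⟨α, β, hα, hβ, hαβ, hpeq⟩ := hseg
      rw [ha] at hpeq
      have hcc : c' + c ∈ C := hCadd c' hc' c hc.1
      have hccne : c' + c ≠ 0 := by
        intro h0
        have hmc : -c = c' := neg_eq_of_add_eq_zero_left h0
        have : c = 0 := hCp c hc.1 (by rw [hmc]; exact hc')
        exact hc.2 this
      -- b = α•b + β•z + k + c' + c
      have hexp : b = (((α • b + β • z) + k) + c') + c := by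
        have h : b = u + c := hbuc.symm
        rw [← heq, ← hpeq] at h
        exact h
      have hkey : β • b = (β • z + k) + (c' + c) := by
        have h3 : β • b = b - α • b := by
          rw [(by linarith : β = 1 - α), sub_smul, one_smul]
        rw [h3]
        nth_rewrite 1 [hexp]
        abel
      by_cases hβ0 : 0 < β
      · -- b ∈ conv (G ∪ B) + K + C
        have hbval : b = z + (β⁻¹ • k + β⁻¹ • (c' + c)) := by
          have : b = β⁻¹ • (β • b) := by
            rw [smul_smul, inv_mul_cancel₀ (ne_of_gt hβ0), one_smul]
          rw [this, hkey, smul_add, smul_add, smul_smul, inv_mul_cancel₀ (ne_of_gt hβ0), one_smul]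
          abel
        have hb' : b ∈ convexHull ℝ (G ∪ (↑B : Set (Fin q → ℝ))) + K + C := by
          refine mem_add3.mpr ⟨z, hz, β⁻¹ • k, hKsmul _ (le_of_lt (inv_pos.mpr hβ0)) _ hk,
            β⁻¹ • (c' + c), hCsmul _ (le_of_lt (inv_pos.mpr hβ0)) _ hcc, ?_⟩
          rw [hbval]; abel
        have hstep : UI ⊆ convexHull ℝ (G ∪ (↑B : Set (Fin q → ℝ))) + K + C := by
          intro ux hux
          obtain ⟨p2, hp2, k2, hk2, c2, hc2, heq2⟩ := mem_add3.mp (hUIsub hux)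
          rw [convexHull_insert hGBne, mem_convexJoin] at hp2
          obtain ⟨a2, ha2, z2, hz2, hseg2⟩ := hp2
          rw [Set.mem_singleton_iff] at ha2
          obtain ⟨α2, β2, hα2, hβ2, hαβ2, hpeq2⟩ := hseg2
          rw [ha2] at hpeq2
          obtain ⟨zb, hzb, kb, hkb, cb, hcb, hbeq⟩ := mem_add3.mp hb'
          refine mem_add3.mpr ⟨α2 • zb + β2 • z2,
            (convex_convexHull ℝ _) hzb hz2 hα2 hβ2 hαβ2,
            α2 • kb + k2, hKadd _ (hKsmul _ hα2 _ hkb) _ hk2,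
            α2 • cb + c2, hCadd _ (hCsmul _ hα2 _ hcb) _ hc2, ?_⟩
          rw [← heq2, ← hpeq2, ← hbeq, smul_add, smul_add]
          abel
        exact ihB hbad' hstep
      · -- contradiction: β = 0
        exfalso
        have hβz : β = 0 := le_antisymm (not_lt.mp hβ0) hβ
        have h0 : k + (c' + c) = 0 := by
          have h := hkey
          rw [hβz, zero_smul, zero_smul, zero_add] at h
          exact h.symm
        have hmk : -k = c' + c := neg_eq_of_add_eq_zero_right h0
        have hk0 : k = 0 := hKC k hk (by rw [hmk]; exact hcc)
        rw [hk0, neg_zero] at hmk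
        exact hccne hmk.symm
theorem vlp_solution_from_projection_solution
    (m n q r : ℕ) (A : Matrix (Fin m) (Fin n) ℝ) (b : Fin m → ℝ)
    (P : Matrix (Fin q) (Fin n) ℝ) (Z : Matrix (Fin q) (Fin r) ℝ)
    (hker : ∀ y : Fin q → ℝ, Z.transpose.mulVec y = 0 → y = 0)
    (C : Set (Fin q → ℝ)) (hC : C = {y | ∀ j, 0 ≤ Z.transpose.mulVec y j})
    (S : Set (Fin n → ℝ)) (hS : S = {x | ∀ i, b i ≤ A.mulVec x i})
    (hSne : S.Nonempty)
    (UI : Set (Fin q → ℝ)) (hUI : UI = (P.mulVec '' S) + C)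
    (L : Set (Fin q → ℝ)) (hL : L = recCone UI ∩ (-recCone UI))
    (hLC : L ∩ C = {0})
    -- (Xpoi, Xdir) is a solution of the associated polyhedral projection problem
    (Xpoi Xdir : Set ((Fin n → ℝ) × (Fin q → ℝ)))
    (hfin1 : Xpoi.Finite) (hfin2 : Xdir.Finite) (hXne : Xpoi.Nonempty)
    (hfeas1 : ∀ s ∈ Xpoi, (∀ i, b i ≤ A.mulVec s.1 i) ∧
      (∀ j, Z.transpose.mulVec (P.mulVec s.1) j ≤ Z.transpose.mulVec s.2 j))
    (hfeas2 : ∀ s ∈ Xdir, s ≠ 0 ∧ (∀ i, (0:ℝ) ≤ A.mulVec s.1 i) ∧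
      (∀ j, Z.transpose.mulVec (P.mulVec s.1) j ≤ Z.transpose.mulVec s.2 j))
    (hrepr : UI = convexHull ℝ (Prod.snd '' Xpoi) + coneOf (Prod.snd '' Xdir))
    (Spoi Sdir : Set (Fin n → ℝ))
    (hSpoi : Spoi = {x | ∃ y, (x, y) ∈ Xpoi ∧ y ∉ UI + (C \ {0})})
    (hSdir : Sdir = {x | ∃ y, (x, y) ∈ Xdir ∧ y ∉ recCone UI + (C \ {0})}) :
    IsVLPSolution A b P C Spoi Sdir := by
  classical
  set Y : Set (Fin q → ℝ) := Prod.snd '' Xpoi with hY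
  set D : Set (Fin q → ℝ) := Prod.snd '' Xdir with hD
  have hYfin : Y.Finite := hfin1.image _
  have hDfin : D.Finite := hfin2.image _
  have hYne : Y.Nonempty := hXne.image _
  set M : Set (Fin q → ℝ) := coneOf D with hM
  -- properties of C
  have hCadd : ∀ c1 ∈ C, ∀ c2 ∈ C, c1 + c2 ∈ C := by
    intro c1 h1 c2 h2
    rw [hC] at h1 h2 ⊢
    intro j
    rw [Matrix.mulVec_add]
    exact add_nonneg (h1 j) (h2 j)
  have hCsmul : ∀ t : ℝ, 0 ≤ t → ∀ c ∈ C, t • c ∈ C := by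
    intro t ht c hc
    rw [hC] at hc ⊢
    intro j
    rw [Matrix.mulVec_smul]
    exact mul_nonneg ht (hc j)
  have hC0 : (0 : Fin q → ℝ) ∈ C := by
    rw [hC]; intro j; rw [Matrix.mulVec_zero]; exact le_rfl
  have hCp : ∀ c ∈ C, -c ∈ C → c = 0 := by
    intro c hc hnc
    rw [hC] at hc hnc
    apply hker
    funext j
    have h1 := hc j
    have h2 := hnc j
    rw [Matrix.mulVec_neg] at h2
    have h2' : Z.transpose.mulVec c j ≤ 0 := by
      have : (0:ℝ) ≤ -(Z.transpose.mulVec c j) := h2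
      linarith
    exact le_antisymm h2' h1
  have hCconv : Convex ℝ C := fun x hx y hy a bb ha hb _ =>
    hCadd _ (hCsmul a ha x hx) _ (hCsmul bb hb y hy)
  -- UI properties
  have hPz_mem_UI : ∀ z ∈ S, P.mulVec z ∈ UI := by
    intro z hz
    rw [hUI]
    exact Set.mem_add.mpr ⟨_, Set.mem_image_of_mem _ hz, 0, hC0, add_zero _⟩
  have hUIC : ∀ u ∈ UI, ∀ c ∈ C, u + c ∈ UI := by
    intro u hu c hcC
    rw [hUI] at hu ⊢
    obtain ⟨pz, hpz, c0, hc0, h⟩ := Set.mem_add.mp hu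
    exact Set.mem_add.mpr ⟨pz, hpz, c0 + c, hCadd _ hc0 _ hcC, by rw [← h]; abel⟩
  have hhom : ∀ x : Fin n → ℝ, (∀ i, (0:ℝ) ≤ A.mulVec x i) → P.mulVec x ∈ recCone UI := by
    intro x hx u hu
    rw [hUI] at hu ⊢
    obtain ⟨pz, ⟨z, hz, rfl⟩, c0, hc0, h⟩ := Set.mem_add.mp hu
    refine Set.mem_add.mpr ⟨P.mulVec (z + x), Set.mem_image_of_mem _ ?_, c0, hc0, ?_⟩
    · rw [hS] at hz ⊢
      intro i
      rw [Matrix.mulVec_add]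
      calc b i ≤ A.mulVec z i := hz i
      _ ≤ A.mulVec z i + A.mulVec x i := le_add_of_nonneg_right (hx i)
      _ = (A.mulVec z + A.mulVec x) i := rfl
    · rw [Matrix.mulVec_add, ← h]; abel
  have hyPx : ∀ (x : Fin n → ℝ) (y : Fin q → ℝ),
      (∀ j, Z.transpose.mulVec (P.mulVec x) j ≤ Z.transpose.mulVec y j) →
      y - P.mulVec x ∈ C := by
    intro x y h
    rw [hC]
    intro j
    rw [Matrix.mulVec_sub]
    exact sub_nonneg.mpr (h j)
  -- M = recCone UI
  have hMadd : ∀ x ∈ M, ∀ y ∈ M, x + y ∈ M := fun x hx y hy => coneOf_add hx hy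
  have hMsmul : ∀ t : ℝ, 0 ≤ t → ∀ x ∈ M, t • x ∈ M := fun t ht x hx => coneOf_smul ht hx
  have hM0 : (0 : Fin q → ℝ) ∈ M := coneOf_zero_mem D
  have hMrec : ∀ mv ∈ M, mv ∈ recCone UI := by
    intro mv hmv u hu
    rw [hrepr] at hu ⊢
    obtain ⟨p, hp, mm, hmm, h⟩ := Set.mem_add.mp hu
    exact Set.mem_add.mpr ⟨p, hp, mm + mv, coneOf_add hmm hmv, by rw [← h]; abel⟩
  have hrecM : recCone UI ⊆ M := by
    rw [hrepr]
    exact recCone_subset_coneOf hYne hYfin hDfin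
  have hCM : C ⊆ M := fun c hcC => hrecM (fun u hu => hUIC u hu c hcC)
  have hMC : ∀ x ∈ M, -x ∈ C → x = 0 := by
    intro x hx hnx
    have h1 : -x ∈ recCone UI := hMrec _ (hCM hnx)
    have h2 : x ∈ recCone UI := hMrec _ hx
    have h3 : -x ∈ L ∩ C := by
      refine ⟨?_, hnx⟩
      rw [hL]
      exact ⟨h1, Set.mem_neg.mpr (by rwa [neg_neg])⟩
    rw [hLC, Set.mem_singleton_iff] at h3
    rw [← neg_neg x, h3, neg_zero]
  -- good generators
  set Yg : Set (Fin q → ℝ) := {y ∈ Y | y ∉ UI + (C \ {0})} with hYg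
  set Dg : Set (Fin q → ℝ) := {d ∈ D | d ∉ recCone UI + (C \ {0})} with hDg
  have hYgY : Yg ⊆ Y := fun y hy => hy.1
  have hDgD : Dg ⊆ D := fun d hd => hd.1
  have hDM : D ⊆ M := fun d hd => mem_coneOf_self hd
  have hKC : ∀ x ∈ coneOf Dg, -x ∈ C → x = 0 := by
    intro x hx hnx
    exact hMC x (coneOf_mono hDgD hx) hnx
  -- direction elimination: M ⊆ coneOf Dg + C
  have hMDg : M ⊆ coneOf Dg + C := by
    have hDbadfin : (D \ Dg).Finite := hDfin.subset Set.diff_subset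
    have hunion : Dg ∪ (↑hDbadfin.toFinset : Set (Fin q → ℝ)) = D := by
      rw [Set.Finite.coe_toFinset]
      exact Set.union_diff_cancel hDgD
    apply dir_elimination M C Dg hCadd hCsmul hMadd hMsmul hM0 hMC hCM
      (fun d hd => hDM (hDgD hd)) hDbadfin.toFinset
    · intro d hd
      rw [Finset.mem_coe, Set.Finite.mem_toFinset] at hd
      exact hDM hd.1
    · intro d hd
      rw [Set.Finite.mem_toFinset] at hd
      have hdD : d ∈ D := hd.1
      have hdbad : d ∈ recCone UI + (C \ {0}) := by
        by_contra hgood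
        exact hd.2 ⟨hdD, hgood⟩
      obtain ⟨rr, hrr, c, hcc, h⟩ := Set.mem_add.mp hdbad
      exact Set.mem_add.mpr ⟨rr, hrecM hrr, c, hcc, h⟩
    · rw [hunion]
      intro mv hmv
      exact Set.mem_add.mpr ⟨mv, hmv, 0, hC0, add_zero mv⟩
  -- point elimination machinery
  have hpoint : ∀ G : Set (Fin q → ℝ), G.Nonempty → ∀ B : Finset (Fin q → ℝ),
      (∀ y ∈ B, y ∈ UI + (C \ {0})) →
      UI ⊆ convexHull ℝ (G ∪ ↑B) + coneOf Dg + C →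
      UI ⊆ convexHull ℝ G + coneOf Dg + C := by
    intro G hGne
    exact point_elimination UI (coneOf Dg) C G hCadd hCsmul hCp
      (fun x hx y hy => coneOf_add hx hy) (fun t ht x hx => coneOf_smul ht hx) hKC hGne
  have hstart : UI ⊆ convexHull ℝ Y + coneOf Dg + C := by
    intro u hu
    rw [hrepr] at hu
    obtain ⟨p, hp, mv, hmv, h⟩ := Set.mem_add.mp hu
    obtain ⟨e, he, c, hcC, h2⟩ := Set.mem_add.mp (hMDg hmv)
    exact mem_add3.mpr ⟨p, hp, e, he, c, hcC, by rw [← h, ← h2]; abel⟩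
  -- Yg is nonempty
  have hYgne : Yg.Nonempty := by
    by_contra hempty
    rw [Set.not_nonempty_iff_eq_empty] at hempty
    obtain ⟨y1, hy1⟩ := hYne
    have hbadall : ∀ y ∈ Y, y ∈ UI + (C \ {0}) := by
      intro y hy
      by_contra hgood
      have : y ∈ Yg := ⟨hy, hgood⟩
      rw [hempty] at this
      exact this
    have hfinB : (Y \ {y1}).Finite := hYfin.subset Set.diff_subset
    have hun : {y1} ∪ (↑hfinB.toFinset : Set (Fin q → ℝ)) = Y := by
      rw [Set.Finite.coe_toFinset]
      exact Set.union_diff_cancel (Set.singleton_subset_iff.mpr hy1)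
    have h1 : UI ⊆ convexHull ℝ {y1} + coneOf Dg + C := by
      apply hpoint {y1} (Set.singleton_nonempty y1) hfinB.toFinset
      · intro y hy
        rw [Set.Finite.mem_toFinset] at hy
        exact hbadall y hy.1
      · rw [hun]; exact hstart
    have hy1UI : y1 ∈ UI := by
      rw [hrepr]
      exact Set.mem_add.mpr ⟨y1, subset_convexHull ℝ Y hy1, 0, coneOf_zero_mem D, add_zero y1⟩
    obtain ⟨u, hu, c, hc, hbuc⟩ := Set.mem_add.mp (hbadall y1 hy1)
    obtain ⟨p, hpc, k, hkK, c', hc', heq⟩ := mem_add3.mp (h1 hu)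
    rw [convexHull_singleton, Set.mem_singleton_iff] at hpc
    have h2 : u = (y1 + k) + c' := by rw [← heq, hpc]
    rw [h2] at hbuc
    have h3 : y1 + (k + (c' + c)) = y1 + 0 := by
      conv_rhs => rw [add_zero, ← hbuc]
      abel
    have h0 := add_left_cancel h3
    have hcc : c' + c ∈ C := hCadd _ hc' _ hc.1
    have hccne : c' + c ≠ 0 := by
      intro hz
      have hmc : -c = c' := neg_eq_of_add_eq_zero_left hz
      exact hc.2 (hCp c hc.1 (by rw [hmc]; exact hc'))
    have hmk : -k = c' + c := neg_eq_of_add_eq_zero_right h0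
    have hk0 : k = 0 := hKC k hkK (by rw [hmk]; exact hcc)
    rw [hk0, neg_zero] at hmk
    exact hccne hmk.symm
  -- main inclusion
  have hmain : UI ⊆ convexHull ℝ Yg + coneOf Dg + C := by
    have hfinB : (Y \ Yg).Finite := hYfin.subset Set.diff_subset
    apply hpoint Yg hYgne hfinB.toFinset
    · intro y hy
      rw [Set.Finite.mem_toFinset] at hy
      by_contra hgood
      exact hy.2 ⟨hy.1, hgood⟩
    · have : Yg ∪ (↑hfinB.toFinset : Set (Fin q → ℝ)) = Y := by
        rw [Set.Finite.coe_toFinset]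
        exact Set.union_diff_cancel hYgY
      rw [this]
      exact hstart
  -- relating Spoi/Sdir to good generators
  have hSpoi_mem : ∀ x, x ∈ Spoi ↔ ∃ y, (x, y) ∈ Xpoi ∧ y ∉ UI + (C \ {0}) := by
    intro x; rw [hSpoi]; rfl
  have hSdir_mem : ∀ x, x ∈ Sdir ↔ ∃ y, (x, y) ∈ Xdir ∧ y ∉ recCone UI + (C \ {0}) := by
    intro x; rw [hSdir]; rfl
  refine ⟨?_, ?_, ?_, ?_, ?_, ?_, ?_, ?_⟩
  · -- Spoi finite
    apply Set.Finite.subset (hfin1.image Prod.fst)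
    intro x hx
    obtain ⟨y, hxy, _⟩ := (hSpoi_mem x).mp hx
    exact ⟨(x, y), hxy, rfl⟩
  · apply Set.Finite.subset (hfin2.image Prod.fst)
    intro x hx
    obtain ⟨y, hxy, _⟩ := (hSdir_mem x).mp hx
    exact ⟨(x, y), hxy, rfl⟩
  · -- Spoi nonempty
    obtain ⟨ys, hysY, hysgood⟩ := hYgne
    obtain ⟨⟨x, y'⟩, hmem, heq⟩ := hysY
    refine ⟨x, (hSpoi_mem x).mpr ⟨ys, ?_, hysgood⟩⟩
    have : y' = ys := heq
    rwa [this] at hmem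
  · -- feasibility of Spoi
    intro x hx
    obtain ⟨y, hxy, _⟩ := (hSpoi_mem x).mp hx
    exact (hfeas1 (x, y) hxy).1
  · -- feasibility of Sdir
    intro x hx
    obtain ⟨y, hxy, hgood⟩ := (hSdir_mem x).mp hx
    obtain ⟨hne0, hfx, hZx⟩ := hfeas2 (x, y) hxy
    refine ⟨?_, hfx⟩
    intro hx0
    subst hx0
    have hyC : y ∈ C := by
      have := hyPx 0 y hZx
      rwa [Matrix.mulVec_zero, sub_zero] at this
    by_cases hy0 : y = 0
    · exact hne0 (by rw [hy0]; rfl)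
    · apply hgood
      refine Set.mem_add.mpr ⟨0, ?_, y, ⟨hyC, hy0⟩, zero_add y⟩
      intro u hu
      rw [add_zero]
      exact hu
  · -- minimizers (points)
    intro x hx
    obtain ⟨y, hxy, hgood⟩ := (hSpoi_mem x).mp hx
    intro hmem
    rw [← hS] at hmem
    obtain ⟨pz, ⟨z, hzS, rfl⟩, c, hc, hPx⟩ := Set.mem_add.mp hmem
    apply hgood
    have hyC : y - P.mulVec x ∈ C := hyPx x y (hfeas1 (x, y) hxy).2
    have hsumC : c + (y - P.mulVec x) ∈ C := hCadd _ hc.1 _ hyC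
    have hsumne : c + (y - P.mulVec x) ≠ 0 := by
      intro hz
      have hmc : -c = y - P.mulVec x := neg_eq_of_add_eq_zero_right hz
      exact hc.2 (hCp c hc.1 (by rw [hmc]; exact hyC))
    refine Set.mem_add.mpr ⟨P.mulVec z, hPz_mem_UI z hzS,
      c + (y - P.mulVec x), ⟨hsumC, hsumne⟩, ?_⟩
    rw [← hPx]
    abel
  · -- minimizers (directions)
    intro x hx
    obtain ⟨y, hxy, hgood⟩ := (hSdir_mem x).mp hx
    intro hmem
    obtain ⟨pz, ⟨z, hzS, rfl⟩, c, hc, hPx⟩ := Set.mem_add.mp hmem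
    apply hgood
    have hyC : y - P.mulVec x ∈ C := hyPx x y (hfeas2 (x, y) hxy).2.2
    have hsumC : c + (y - P.mulVec x) ∈ C := hCadd _ hc.1 _ hyC
    have hsumne : c + (y - P.mulVec x) ≠ 0 := by
      intro hz
      have hmc : -c = y - P.mulVec x := neg_eq_of_add_eq_zero_right hz
      exact hc.2 (hCp c hc.1 (by rw [hmc]; exact hyC))
    refine Set.mem_add.mpr ⟨P.mulVec z, hhom z hzS,
      c + (y - P.mulVec x), ⟨hsumC, hsumne⟩, ?_⟩
    rw [← hPx]
    abel
  · -- the representation equality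
    rw [← hS, ← hUI]
    have hPSpoiUI : P.mulVec '' Spoi ⊆ UI := by
      rintro _ ⟨x, hx, rfl⟩
      obtain ⟨y, hxy, _⟩ := (hSpoi_mem x).mp hx
      apply hPz_mem_UI
      rw [hS]
      exact (hfeas1 (x, y) hxy).1
    have hPSdirM : P.mulVec '' Sdir ⊆ M := by
      rintro _ ⟨x, hx, rfl⟩
      obtain ⟨y, hxy, _⟩ := (hSdir_mem x).mp hx
      exact hrecM (hhom x (hfeas2 (x, y) hxy).2.1)
    have hUIconv : Convex ℝ UI := by
      rw [hrepr]
      exact (convex_convexHull ℝ Y).add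
        (fun x hx y hy a bb ha hb _ => coneOf_add (coneOf_smul ha hx) (coneOf_smul hb hy))
    apply Set.Subset.antisymm
    · -- ⊆
      intro v hv
      obtain ⟨a, ha, e, he, c, hcC, hveq⟩ := mem_add3.mp hv
      have haUI : a ∈ UI := convexHull_min hPSpoiUI hUIconv ha
      have heM : e ∈ M := coneOf_subset hPSdirM hM0 hMadd hMsmul he
      have h1 : a + e ∈ UI := hMrec e heM a haUI
      have h2 : a + e + c ∈ UI := hUIC _ h1 c hcC
      rwa [hveq] at h2
    · -- ⊇
      intro u hu
      obtain ⟨p, hp, e, he, c, hcC, hueq⟩ := mem_add3.mp (hmain hu)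
      -- p ∈ convexHull Yg ⊆ convexHull (P '' Spoi) + C
      have hYgsub : Yg ⊆ convexHull ℝ (P.mulVec '' Spoi) + C := by
        intro y hy
        obtain ⟨⟨x, y'⟩, hmem, heq2⟩ := hy.1
        have hy' : y' = y := heq2
        rw [hy'] at hmem
        have hxSpoi : x ∈ Spoi := (hSpoi_mem x).mpr ⟨y, hmem, hy.2⟩
        refine Set.mem_add.mpr ⟨P.mulVec x,
          subset_convexHull ℝ _ (Set.mem_image_of_mem _ hxSpoi),
          y - P.mulVec x, hyPx x y (hfeas1 (x, y) hmem).2, by abel⟩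
      have hpsub : p ∈ convexHull ℝ (P.mulVec '' Spoi) + C := by
        apply convexHull_min hYgsub ((convex_convexHull ℝ _).add hCconv) hp
      -- e ∈ coneOf Dg ⊆ coneOf (P '' Sdir) + C
      have hDgsub : Dg ⊆ coneOf (P.mulVec '' Sdir) + C := by
        intro d hd
        obtain ⟨⟨x, d'⟩, hmem, heq2⟩ := hd.1
        have hd' : d' = d := heq2
        rw [hd'] at hmem
        have hxSdir : x ∈ Sdir := (hSdir_mem x).mpr ⟨d, hmem, hd.2⟩
        refine Set.mem_add.mpr ⟨P.mulVec x,
          mem_coneOf_self (Set.mem_image_of_mem _ hxSdir),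
          d - P.mulVec x, hyPx x d (hfeas2 (x, d) hmem).2.2, by abel⟩
      have hesub : e ∈ coneOf (P.mulVec '' Sdir) + C := by
        refine coneOf_subset hDgsub ?_ ?_ ?_ he
        · exact Set.mem_add.mpr ⟨0, coneOf_zero_mem _, 0, hC0, add_zero 0⟩
        · intro x hx y hy
          obtain ⟨e1, he1, c1, hc1, h1⟩ := Set.mem_add.mp hx
          obtain ⟨e2, he2, c2, hc2, h2⟩ := Set.mem_add.mp hy
          exact Set.mem_add.mpr ⟨e1 + e2, coneOf_add he1 he2, c1 + c2,
            hCadd _ hc1 _ hc2, by rw [← h1, ← h2]; abel⟩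
        · intro t ht x hx
          obtain ⟨e1, he1, c1, hc1, h1⟩ := Set.mem_add.mp hx
          exact Set.mem_add.mpr ⟨t • e1, coneOf_smul ht he1, t • c1,
            hCsmul t ht _ hc1, by rw [← h1, smul_add]⟩
      obtain ⟨a1, ha1, c1, hc1, hpe⟩ := Set.mem_add.mp hpsub
      obtain ⟨e1, he1, c2, hc2, hee⟩ := Set.mem_add.mp hesub
      refine mem_add3.mpr ⟨a1, ha1, e1, he1, c1 + (c2 + c),
        hCadd _ hc1 _ (hCadd _ hc2 _ hcC), ?_⟩
      rw [← hueq, ← hpe, ← hee]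
      abel
end Elimination
end

section
/- A vector linear program (minimize Px s.t. Ax ≥ b with ordering cone C = {y : Z^T y ≥ 0}, ker Z^T = {0}) has a solution if and only if it is feasible (S = {x : Ax ≥ b} ≠ ∅) and L ∩ C = {0}, where L is the lineality space of the upper image 𝒫 = P[S] + C. -/
open Pointwise Set

section NNc
variable {X : Type*} [AddCommGroup X] [Module ℝ X]

def NNc (G : Finset X) : Set X :=
  {x | ∃ c : X → ℝ, (∀ g, 0 ≤ c g) ∧ x = ∑ g ∈ G, c g • g}

lemma NNc.zero_mem (G : Finset X) : (0:X) ∈ NNc G :=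
  ⟨fun _ => 0, fun _ => le_rfl, by simp⟩

lemma NNc.gen_mem {G : Finset X} {g : X} (hg : g ∈ G) : g ∈ NNc G := by
  classical
  refine ⟨fun h => if h = g then 1 else 0, fun h => by positivity, ?_⟩
  rw [Finset.sum_eq_single g]
  · simp
  · intro h hh hne; simp [hne]
  · intro h; exact absurd hg h

lemma NNc.add_mem {G : Finset X} {x y : X} (hx : x ∈ NNc G) (hy : y ∈ NNc G) :
    x + y ∈ NNc G := by
  obtain ⟨c, hc, rfl⟩ := hx
  obtain ⟨d, hd, rfl⟩ := hy
  exact ⟨fun g => c g + d g, fun g => add_nonneg (hc g) (hd g), by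
    rw [← Finset.sum_add_distrib]; congr 1; ext g; rw [add_smul]⟩

lemma NNc.smul_mem {G : Finset X} {x : X} {t : ℝ} (ht : 0 ≤ t) (hx : x ∈ NNc G) :
    t • x ∈ NNc G := by
  obtain ⟨c, hc, rfl⟩ := hx
  exact ⟨fun g => t * c g, fun g => mul_nonneg ht (hc g), by
    rw [Finset.smul_sum]; congr 1; ext g; rw [smul_smul]⟩

lemma NNc.sum_mem {G : Finset X} {ι : Type*} (s : Finset ι) (f : ι → X)
    (hf : ∀ i ∈ s, f i ∈ NNc G) : (∑ i ∈ s, f i) ∈ NNc G :=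
  Finset.sum_induction f (· ∈ NNc G) (fun _ _ => NNc.add_mem) (NNc.zero_mem G) hf

lemma NNc.subset {G : Finset X} {M : Set X} (h0 : 0 ∈ M)
    (hadd : ∀ a ∈ M, ∀ b ∈ M, a + b ∈ M)
    (hsmul : ∀ t : ℝ, 0 ≤ t → ∀ a ∈ M, t • a ∈ M)
    (hG : ↑G ⊆ M) : NNc G ⊆ M := by
  rintro x ⟨c, hc, rfl⟩
  refine Finset.sum_induction _ (· ∈ M) (fun a b ha hb => hadd a ha b hb) h0 ?_
  intro g hg
  exact hsmul _ (hc g) _ (hG hg)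

lemma NNc.mono {G G' : Finset X} (h : G ⊆ G') : NNc G ⊆ NNc G' :=
  NNc.subset (NNc.zero_mem G') (fun _ ha _ hb => NNc.add_mem ha hb)
    (fun _ ht _ ha => NNc.smul_mem ht ha) (fun _ hg => NNc.gen_mem (h hg))

lemma NNc.convex (G : Finset X) : Convex ℝ (NNc G) := by
  intro x hx y hy a bb ha hb _
  exact NNc.add_mem (NNc.smul_mem ha hx) (NNc.smul_mem hb hy)

lemma NNc.image {Y : Type*} [AddCommGroup Y] [Module ℝ Y] {G : Finset X}
    [DecidableEq Y] (T : X →ₗ[ℝ] Y) {x : X} (hx : x ∈ NNc G) :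
    T x ∈ NNc (G.image T) := by
  obtain ⟨c, hc, rfl⟩ := hx
  rw [map_sum]
  refine NNc.sum_mem _ _ (fun g hg => ?_)
  rw [map_smul]
  exact NNc.smul_mem (hc g) (NNc.gen_mem (Finset.mem_image_of_mem _ hg))

end NNc

section DD
variable {X : Type*} [AddCommGroup X] [Module ℝ X] [DecidableEq X]

/-- the double-description step: intersecting a finitely generated cone with a
halfspace through 0 yields a finitely generated cone. -/
lemma dd_core (a : X →ₗ[ℝ] ℝ) (G : Finset X) :
    ∀ N : ℕ, ∀ s : Finset X, ↑s ⊆ (G : Set X) → s.card ≤ N →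
      ∀ c : X → ℝ, (∀ g, 0 ≤ c g) → 0 ≤ a (∑ g ∈ s, c g • g) →
      (∑ g ∈ s, c g • g) ∈
        NNc (G.filter (fun g => 0 ≤ a g) ∪
          ((G.filter fun g => 0 < a g) ×ˢ (G.filter fun g => a g < 0)).image
            (fun p => a p.1 • p.2 + (- a p.2) • p.1)) := by
  intro N
  set G' := G.filter (fun g => 0 ≤ a g) ∪
      ((G.filter fun g => 0 < a g) ×ˢ (G.filter fun g => a g < 0)).image
        (fun p => a p.1 • p.2 + (- a p.2) • p.1) with hG'
  induction N with
  | zero =>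
    intro s hsG hcard c hc ha
    have : s = ∅ := Finset.card_eq_zero.1 (Nat.le_zero.1 hcard)
    subst this
    simpa using NNc.zero_mem G'
  | succ N ih =>
    intro s hsG hcard c hc ha
    by_cases hcase : ∀ g ∈ s, a g < 0 → c g = 0
    · refine NNc.sum_mem _ _ (fun g hg => ?_)
      by_cases hag : a g < 0
      · rw [hcase g hg hag]; simpa using NNc.zero_mem G'
      · refine NNc.smul_mem (hc g) (NNc.gen_mem ?_)
        exact Finset.mem_union_left _ (Finset.mem_filter.2 ⟨hsG hg, not_lt.1 hag⟩)
    · push_neg at hcase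
      obtain ⟨h, hhs, hah, hch0⟩ := hcase
      have hch : 0 < c h := lt_of_le_of_ne (hc h) (Ne.symm hch0)
      have hax : a (∑ g ∈ s, c g • g) = ∑ g ∈ s, c g * a g := by
        rw [map_sum]; congr 1; ext g; rw [map_smul, smul_eq_mul]
      -- find a generator with positive contribution
      have hex : ∃ g₀ ∈ s, 0 < c g₀ * a g₀ := by
        by_contra hno
        push_neg at hno
        have : (∑ g ∈ s, c g * a g) < ∑ g ∈ s, (0:ℝ) :=
          Finset.sum_lt_sum hno ⟨h, hhs, by nlinarith⟩
        rw [Finset.sum_const_zero] at this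
        rw [hax] at ha; linarith
      obtain ⟨g₀, hg₀s, hgpos⟩ := hex
      have hcg₀ : 0 < c g₀ := lt_of_le_of_ne (hc g₀)
        (by intro heq; rw [← heq] at hgpos; simp at hgpos)
      have hag₀ : 0 < a g₀ := by nlinarith [hc g₀]
      have hne : g₀ ≠ h := by rintro rfl; linarith
      set u := a g₀ • h + (- a h) • g₀ with hu
      have huG' : u ∈ G' := by
        refine Finset.mem_union_right _ (Finset.mem_image.2 ⟨(g₀, h), ?_, rfl⟩)
        exact Finset.mem_product.2 ⟨Finset.mem_filter.2 ⟨hsG hg₀s, hag₀⟩,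
          Finset.mem_filter.2 ⟨hsG hhs, hah⟩⟩
      set μ := min (c h / a g₀) (c g₀ / (- a h)) with hμ
      have hμpos : 0 < μ := lt_min (div_pos hch hag₀) (div_pos hcg₀ (by linarith))
      have hμh : μ * a g₀ ≤ c h := by
        rw [← le_div_iff₀ hag₀]; exact min_le_left _ _
      have hμg₀ : μ * (- a h) ≤ c g₀ := by
        rw [← le_div_iff₀ (by linarith : (0:ℝ) < - a h)]; exact min_le_right _ _
      set c' : X → ℝ := fun g =>
        if g = h then c h - μ * a g₀ else if g = g₀ then c g₀ - μ * (- a h) else c g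
        with hc'
      have hc'nonneg : ∀ g, 0 ≤ c' g := by
        intro g
        simp only [hc']
        split_ifs with h1 h2
        · linarith
        · linarith
        · exact hc g
      -- expansion of sum
      have hsplit : ∀ g ∈ s, c g • g = c' g • g +
          (if g = h then (μ * a g₀) • g else if g = g₀ then (μ * (- a h)) • g else 0) := by
        intro g _
        simp only [hc']
        by_cases h1 : g = h
        · subst h1
          rw [if_pos rfl, if_pos rfl, ← add_smul]
          ring_nf
        · by_cases h2 : g = g₀
          · subst h2
            rw [if_neg h1, if_neg h1, if_pos rfl, if_pos rfl, ← add_smul]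
            ring_nf
          · simp [h1, h2]
      have hite : (∑ g ∈ s, (if g = h then (μ * a g₀) • g else
          if g = g₀ then (μ * (- a h)) • g else 0)) = (μ * a g₀) • h + (μ * (- a h)) • g₀ := by
        rw [← Finset.add_sum_erase _ _ hhs]
        simp only [if_pos rfl]
        congr 1
        have hg₀e : g₀ ∈ s.erase h := Finset.mem_erase.2 ⟨hne, hg₀s⟩
        rw [← Finset.add_sum_erase _ _ hg₀e, if_neg hne, if_pos rfl]
        rw [Finset.sum_eq_zero, add_zero]
        intro g hg
        have hg1 : g ≠ g₀ := (Finset.mem_erase.1 hg).1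
        have hg2 : g ≠ h := (Finset.mem_erase.1 (Finset.mem_erase.1 hg).2).1
        simp [hg1, hg2]
      have hsum : (∑ g ∈ s, c g • g) = μ • u + ∑ g ∈ s, c' g • g := by
        rw [Finset.sum_congr rfl hsplit, Finset.sum_add_distrib, hite, hu]
        rw [smul_add, smul_smul, smul_smul]
        abel
      have hau : a u = 0 := by
        rw [hu]; simp only [map_add, map_smul, smul_eq_mul]; ring
      have ha' : 0 ≤ a (∑ g ∈ s, c' g • g) := by
        have := ha
        rw [hsum, map_add, map_smul, hau, smul_eq_mul, mul_zero, zero_add] at this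
        exact this
      set s' := s.filter (fun g => c' g ≠ 0) with hs'
      have hsum' : (∑ g ∈ s, c' g • g) = ∑ g ∈ s', c' g • g := by
        rw [hs']
        rw [Finset.sum_filter_of_ne]
        intro g _ hg
        intro hc0
        exact hg (by rw [hc0, zero_smul])
      have hcard' : s'.card ≤ N := by
        have hvanish : c' h = 0 ∨ c' g₀ = 0 := by
          rcases min_cases (c h / a g₀) (c g₀ / (- a h)) with ⟨he, _⟩ | ⟨he, _⟩
          · left
            simp only [hc', if_true]
            rw [hμ, he, div_mul_cancel₀]
            · ring
            · exact ne_of_gt hag₀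
          · right
            simp only [hc', if_neg hne, if_true]
            rw [hμ, he, div_mul_cancel₀]
            · ring
            · linarith
        have : ∃ g₁ ∈ s, c' g₁ = 0 := by
          rcases hvanish with hv | hv
          · exact ⟨h, hhs, hv⟩
          · exact ⟨g₀, hg₀s, hv⟩
        obtain ⟨g₁, hg₁s, hg₁⟩ := this
        have hsub : s' ⊆ s.erase g₁ := by
          intro g hg
          rw [hs', Finset.mem_filter] at hg
          refine Finset.mem_erase.2 ⟨?_, hg.1⟩
          rintro rfl
          exact hg.2 hg₁
        calc s'.card ≤ (s.erase g₁).card := Finset.card_le_card hsub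
          _ = s.card - 1 := Finset.card_erase_of_mem hg₁s
          _ ≤ N := by omega
      have hmem : (∑ g ∈ s', c' g • g) ∈ NNc G' := by
        refine ih s' ?_ hcard' c' hc'nonneg ?_
        · exact fun g hg => hsG (Finset.filter_subset _ _ hg)
        · rw [← hsum']; exact ha'
      rw [hsum, hsum']
      exact NNc.add_mem (NNc.smul_mem (le_of_lt hμpos) (NNc.gen_mem huG')) hmem

lemma dd_step (a : X →ₗ[ℝ] ℝ) (G : Finset X) :
    ∃ G' : Finset X, NNc G ∩ {x | 0 ≤ a x} = NNc G' := by
  refine ⟨G.filter (fun g => 0 ≤ a g) ∪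
      ((G.filter fun g => 0 < a g) ×ˢ (G.filter fun g => a g < 0)).image
        (fun p => a p.1 • p.2 + (- a p.2) • p.1), ?_⟩
  apply Set.Subset.antisymm
  · rintro x ⟨hxG, hxa⟩
    obtain ⟨c, hc, rfl⟩ := hxG
    exact dd_core a G G.card G (by simp) le_rfl c hc hxa
  · refine NNc.subset ⟨NNc.zero_mem G, by simp⟩
      (fun p hp q hq => ⟨NNc.add_mem hp.1 hq.1, by
        have := hp.2; have := hq.2
        simp only [mem_setOf_eq, map_add] at *
        linarith⟩)
      (fun t ht p hp => ⟨NNc.smul_mem ht hp.1, by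
        have := hp.2
        simp only [mem_setOf_eq, map_smul, smul_eq_mul] at *
        positivity⟩) ?_
    intro g hg
    rcases Finset.mem_union.1 hg with hg | hg
    · rw [Finset.mem_filter] at hg
      exact ⟨NNc.gen_mem hg.1, hg.2⟩
    · obtain ⟨⟨g₀, h⟩, hp, rfl⟩ := Finset.mem_image.1 hg
      rw [Finset.mem_product, Finset.mem_filter, Finset.mem_filter] at hp
      refine ⟨NNc.add_mem (NNc.smul_mem (le_of_lt hp.1.2) (NNc.gen_mem hp.2.1))
        (NNc.smul_mem (by linarith [hp.2.2] : (0:ℝ) ≤ - a h) (NNc.gen_mem hp.1.1)), ?_⟩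
      simp only [mem_setOf_eq, map_add, map_smul, smul_eq_mul]
      nlinarith [hp.1.2, hp.2.2]

/-- every polyhedral cone is finitely generated -/
lemma cone_rep {ι : Type*} [Fintype ι] (f : ι → (X →ₗ[ℝ] ℝ)) (G₀ : Finset X)
    (hG₀ : NNc G₀ = Set.univ) :
    ∃ G : Finset X, {x | ∀ i, 0 ≤ f i x} = NNc G := by
  classical
  suffices h : ∀ t : Finset ι, ∃ G : Finset X, {x | ∀ i ∈ t, 0 ≤ f i x} = NNc G by
    obtain ⟨G, hG⟩ := h Finset.univ
    exact ⟨G, by simpa using hG⟩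
  intro t
  induction t using Finset.induction_on with
  | empty => exact ⟨G₀, by simp [hG₀.symm]⟩
  | insert a t hni ih =>
    obtain ⟨G, hG⟩ := ih
    obtain ⟨G', hG'⟩ := dd_step (f a) G
    refine ⟨G', ?_⟩
    rw [← hG']
    ext x
    simp only [mem_setOf_eq, Finset.mem_insert, mem_inter_iff, ← hG, mem_setOf_eq]
    constructor
    · intro hx
      exact ⟨fun i hi => hx i (Or.inr hi), hx a (Or.inl rfl)⟩
    · rintro ⟨h1, h2⟩ i (rfl | hi)
      · exact h2
      · exact h1 i hi

end DD

section Gens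

lemma gens_pi (n : ℕ) : ∃ G₀ : Finset (Fin n → ℝ), NNc G₀ = Set.univ := by
  classical
  refine ⟨(Finset.univ.image fun i => (Pi.single i 1 : Fin n → ℝ)) ∪
    (Finset.univ.image fun i => (Pi.single i (-1) : Fin n → ℝ)), ?_⟩
  apply Set.eq_univ_of_forall
  intro x
  have hx : x = ∑ i, x i • (Pi.single i 1 : Fin n → ℝ) := by
    funext j
    rw [Finset.sum_apply]
    simp [Pi.single_apply]
  rw [hx]
  refine NNc.sum_mem _ _ (fun i _ => ?_)
  rcases le_total 0 (x i) with h | h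
  · exact NNc.smul_mem h (NNc.gen_mem (Finset.mem_union_left _
      (Finset.mem_image_of_mem _ (Finset.mem_univ i))))
  · have : x i • (Pi.single i 1 : Fin n → ℝ) = (-(x i)) • (Pi.single i (-1) : Fin n → ℝ) := by
      rw [← Pi.single_smul, ← Pi.single_smul]
      simp
    rw [this]
    exact NNc.smul_mem (by linarith) (NNc.gen_mem (Finset.mem_union_right _
      (Finset.mem_image_of_mem _ (Finset.mem_univ i))))

lemma gens_real : ∃ G₀ : Finset ℝ, NNc G₀ = Set.univ := by
  refine ⟨{1, -1}, ?_⟩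
  apply Set.eq_univ_of_forall
  intro x
  rcases le_total 0 x with h | h
  · have : x = x • (1:ℝ) := by simp
    rw [this]
    exact NNc.smul_mem h (NNc.gen_mem (by simp))
  · have : x = (-x) • (-1:ℝ) := by simp
    rw [this]
    exact NNc.smul_mem (by linarith) (NNc.gen_mem (by simp))

lemma gens_prod {X Y : Type*} [AddCommGroup X] [Module ℝ X] [AddCommGroup Y] [Module ℝ Y]
    (hX : ∃ G₀ : Finset X, NNc G₀ = Set.univ) (hY : ∃ G₀ : Finset Y, NNc G₀ = Set.univ) :
    ∃ G₀ : Finset (X × Y), NNc G₀ = Set.univ := by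
  classical
  obtain ⟨GX, hGX⟩ := hX
  obtain ⟨GY, hGY⟩ := hY
  refine ⟨GX.image (LinearMap.inl ℝ X Y) ∪ GY.image (LinearMap.inr ℝ X Y), ?_⟩
  apply Set.eq_univ_of_forall
  intro p
  have hp : p = LinearMap.inl ℝ X Y p.1 + LinearMap.inr ℝ X Y p.2 := by simp
  rw [hp]
  refine NNc.add_mem ?_ ?_
  · exact NNc.mono Finset.subset_union_left
      (NNc.image (LinearMap.inl ℝ X Y) (hGX ▸ Set.mem_univ p.1))
  · exact NNc.mono Finset.subset_union_right
      (NNc.image (LinearMap.inr ℝ X Y) (hGY ▸ Set.mem_univ p.2))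

end Gens

section PolyMW

variable {X : Type*} [AddCommGroup X] [Module ℝ X] [DecidableEq X]

/-- Minkowski–Weyl: every H-polyhedron is of the form `conv V + cone R`, where
moreover `cone R` is exactly the H-recession cone. -/
lemma polyMW {ι : Type*} [Fintype ι] (f : ι → (X →ₗ[ℝ] ℝ)) (β : ι → ℝ)
    (hU : ∃ G₀ : Finset (X × ℝ), NNc G₀ = Set.univ) :
    ∃ V R : Finset X, ↑V ⊆ {x | ∀ i, β i ≤ f i x} ∧
      ({x : X | ∀ i, β i ≤ f i x}.Nonempty → V.Nonempty) ∧
      {x | ∀ i, β i ≤ f i x} = convexHull ℝ ↑V + NNc R ∧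
      NNc R = {x | ∀ i, 0 ≤ f i x} := by
  classical
  obtain ⟨G₀, hG₀⟩ := hU
  set fh : Option ι → ((X × ℝ) →ₗ[ℝ] ℝ) := fun o =>
    match o with
    | none => LinearMap.snd ℝ X ℝ
    | some i => (f i).comp (LinearMap.fst ℝ X ℝ) - β i • (LinearMap.snd ℝ X ℝ)
    with hfh
  obtain ⟨G, hK⟩ := cone_rep fh G₀ hG₀
  have hKmem : ∀ p : X × ℝ, p ∈ NNc G ↔ ((∀ i, β i * p.2 ≤ f i p.1) ∧ 0 ≤ p.2) := by
    intro p
    rw [← hK]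
    constructor
    · intro hp
      refine ⟨fun i => ?_, ?_⟩
      · have := hp (some i)
        simp only [hfh, LinearMap.sub_apply, LinearMap.comp_apply, LinearMap.fst_apply,
          LinearMap.smul_apply, LinearMap.snd_apply, smul_eq_mul] at this
        linarith
      · exact hp none
    · rintro ⟨h1, h2⟩ o
      match o with
      | none => exact h2
      | some i =>
        simp only [hfh, LinearMap.sub_apply, LinearMap.comp_apply, LinearMap.fst_apply,
          LinearMap.smul_apply, LinearMap.snd_apply, smul_eq_mul]
        linarith [h1 i]
  have hGK : ∀ g ∈ G, (∀ i, β i * g.2 ≤ f i g.1) ∧ 0 ≤ g.2 :=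
    fun g hg => (hKmem g).1 (NNc.gen_mem hg)
  set pos := G.filter (fun g => 0 < g.2) with hpos
  set zer := G.filter (fun g => ¬ 0 < g.2) with hzer
  set V := pos.image (fun g => (g.2)⁻¹ • g.1) with hV
  set R := zer.image Prod.fst with hR
  -- decomposition of a combination
  have hdecomp : ∀ (c : (X × ℝ) → ℝ) (x : X) (t : ℝ), ((x, t) = ∑ g ∈ G, c g • g) →
      x = (∑ g ∈ pos, c g • g.1) + (∑ g ∈ zer, c g • g.1) ∧
      t = ∑ g ∈ pos, c g * g.2 := by
    intro c x t h
    have h1 : x = ∑ g ∈ G, c g • g.1 := by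
      calc x = (LinearMap.fst ℝ X ℝ) (x, t) := rfl
        _ = (LinearMap.fst ℝ X ℝ) (∑ g ∈ G, c g • g) := by rw [← h]
        _ = ∑ g ∈ G, c g • g.1 := by rw [map_sum]; simp
    have h2 : t = ∑ g ∈ G, c g * g.2 := by
      calc t = (LinearMap.snd ℝ X ℝ) (x, t) := rfl
        _ = (LinearMap.snd ℝ X ℝ) (∑ g ∈ G, c g • g) := by rw [← h]
        _ = ∑ g ∈ G, c g * g.2 := by rw [map_sum]; simp
    constructor
    · rw [h1, ← Finset.sum_filter_add_sum_filter_not G (fun g => 0 < g.2)]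
    · rw [h2, ← Finset.sum_filter_add_sum_filter_not G (fun g => 0 < g.2)]
      have : ∑ g ∈ zer, c g * g.2 = 0 := by
        refine Finset.sum_eq_zero (fun g hg => ?_)
        rw [hzer, Finset.mem_filter] at hg
        have h0 : g.2 = 0 := le_antisymm (not_lt.1 hg.2) (hGK g hg.1).2
        rw [h0, mul_zero]
      rw [this, add_zero]
  have hzer_rec : ∀ g ∈ zer, ∀ i, 0 ≤ f i g.1 := by
    intro g hg i
    rw [hzer, Finset.mem_filter] at hg
    have h0 : g.2 = 0 := le_antisymm (not_lt.1 hg.2) (hGK g hg.1).2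
    have := (hGK g hg.1).1 i
    rw [h0, mul_zero] at this
    exact this
  have hRrec : NNc R ⊆ {x | ∀ i, 0 ≤ f i x} := by
    refine NNc.subset ?_ ?_ ?_ ?_
    · intro i; simp
    · intro p hp q hq i
      have := hp i; have := hq i
      simp only [mem_setOf_eq, map_add]
      linarith
    · intro s hs p hp i
      have := hp i
      simp only [mem_setOf_eq, map_smul, smul_eq_mul]
      positivity
    · rintro ρ hρ
      rw [hR] at hρ
      obtain ⟨g, hg, rfl⟩ := Finset.mem_coe.1 hρ |> Finset.mem_image.1
      exact fun i => hzer_rec g hg i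
  have hVS : ↑V ⊆ {x : X | ∀ i, β i ≤ f i x} := by
    rintro v hv
    rw [hV] at hv
    obtain ⟨g, hg, rfl⟩ := Finset.mem_coe.1 hv |> Finset.mem_image.1
    rw [hpos, Finset.mem_filter] at hg
    intro i
    have hgi := (hGK g hg.1).1 i
    have hg2 : 0 < g.2 := hg.2
    rw [map_smul, smul_eq_mul, ← mul_le_mul_iff_right₀ hg2]
    calc g.2 * β i = β i * g.2 := by ring
      _ ≤ f i g.1 := hgi
      _ = g.2 * (g.2⁻¹ * f i g.1) := (mul_inv_cancel_left₀ (ne_of_gt hg2) _).symm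
  refine ⟨V, R, hVS, ?_, ?_, ?_⟩
  · rintro ⟨x, hx⟩
    have hmem : ((x, (1:ℝ)) : X × ℝ) ∈ NNc G :=
      (hKmem (x, 1)).2 ⟨fun i => by simpa using hx i, by norm_num⟩
    obtain ⟨c, hc, hsum⟩ := hmem
    obtain ⟨_, ht⟩ := hdecomp c x 1 hsum
    have : pos.Nonempty := by
      by_contra hne
      rw [Finset.not_nonempty_iff_eq_empty] at hne
      rw [hne, Finset.sum_empty] at ht
      norm_num at ht
    exact (this.image _)
  · apply Set.Subset.antisymm
    · intro x hx
      have hmem : ((x, (1:ℝ)) : X × ℝ) ∈ NNc G :=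
        (hKmem (x, 1)).2 ⟨fun i => by simpa using hx i, by norm_num⟩
      obtain ⟨c, hc, hsum⟩ := hmem
      obtain ⟨hx1, ht⟩ := hdecomp c x 1 hsum
      have hzmem : (∑ g ∈ zer, c g • g.1) ∈ NNc R := by
        refine NNc.sum_mem _ _ (fun g hg => ?_)
        exact NNc.smul_mem (hc g) (NNc.gen_mem (Finset.mem_image_of_mem _ hg))
      have hpmem : (∑ g ∈ pos, c g • g.1) ∈ convexHull ℝ (V : Set X) := by
        have hw : ∀ g ∈ pos, 0 ≤ c g * g.2 := by
          intro g hg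
          rw [hpos, Finset.mem_filter] at hg
          exact mul_nonneg (hc g) (le_of_lt hg.2)
        have hcm : pos.centerMass (fun g => c g * g.2) (fun g => (g.2)⁻¹ • g.1) =
            ∑ g ∈ pos, c g • g.1 := by
          rw [Finset.centerMass, ← ht]
          norm_num
          refine Finset.sum_congr rfl (fun g hg => ?_)
          rw [hpos, Finset.mem_filter] at hg
          rw [smul_smul]
          congr 1
          rw [mul_assoc, mul_inv_cancel₀ (ne_of_gt hg.2), mul_one]
        rw [← hcm]
        refine Finset.centerMass_mem_convexHull _ hw (by rw [← ht]; norm_num) ?_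
        intro g hg
        exact Finset.mem_coe.2 (Finset.mem_image_of_mem _ hg)
      rw [hx1]
      exact Set.add_mem_add hpmem hzmem
    · rintro x ⟨p, hp, r, hr, rfl⟩
      have hpS : p ∈ {x : X | ∀ i, β i ≤ f i x} := by
        have hconv : Convex ℝ {x : X | ∀ i, β i ≤ f i x} := by
          intro y hy z hz a bb ha hb hab i
          have h1 := mul_le_mul_of_nonneg_left (hy i) ha
          have h2 := mul_le_mul_of_nonneg_left (hz i) hb
          simp only [mem_setOf_eq, map_add, map_smul, smul_eq_mul]
          have h3 : β i = a * β i + bb * β i := by rw [← add_mul, hab, one_mul]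
          linarith
        exact convexHull_min hVS hconv hp
      intro i
      have h1 := hpS i
      have h2 := hRrec hr i
      rw [map_add]
      linarith
  · apply Set.Subset.antisymm hRrec
    intro x hx
    have hmem : ((x, (0:ℝ)) : X × ℝ) ∈ NNc G :=
      (hKmem (x, 0)).2 ⟨fun i => by simpa using hx i, le_rfl⟩
    obtain ⟨c, hc, hsum⟩ := hmem
    obtain ⟨hx1, ht⟩ := hdecomp c x 0 hsum
    have hposzero : ∀ g ∈ pos, c g * g.2 = 0 := by
      have hterm : ∀ g ∈ pos, 0 ≤ c g * g.2 := by
        intro g hg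
        rw [hpos, Finset.mem_filter] at hg
        exact mul_nonneg (hc g) (le_of_lt hg.2)
      intro g hg
      exact (Finset.sum_eq_zero_iff_of_nonneg hterm).1 ht.symm g hg
    have hpzero : (∑ g ∈ pos, c g • g.1) = 0 := by
      refine Finset.sum_eq_zero (fun g hg => ?_)
      have hg2 : 0 < g.2 := by
        rw [hpos, Finset.mem_filter] at hg; exact hg.2
      have := hposzero g hg
      have hcg : c g = 0 := by
        rcases mul_eq_zero.1 this with h | h
        · exact h
        · exact absurd h (ne_of_gt hg2)
      rw [hcg, zero_smul]
    rw [hx1, hpzero, zero_add]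
    refine NNc.sum_mem _ _ (fun g hg => ?_)
    exact NNc.smul_mem (hc g) (NNc.gen_mem (Finset.mem_image_of_mem _ hg))

end PolyMW

section LP

variable {X : Type*} [AddCommGroup X] [Module ℝ X]

lemma lp_attain (V R : Finset X) (S' : Set X)
    (hrep : S' = convexHull ℝ ↑V + NNc R) (hVne : V.Nonempty)
    (f₀ : X →ₗ[ℝ] ℝ) (hR : ∀ ρ ∈ R, 0 ≤ f₀ ρ) :
    ∃ xm ∈ V, ∀ y ∈ S', f₀ xm ≤ f₀ y := by
  obtain ⟨xm, hxm, hmin⟩ := Finset.exists_min_image V f₀ hVne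
  refine ⟨xm, hxm, fun y hy => ?_⟩
  rw [hrep] at hy
  obtain ⟨p, hp, qq, hq, rfl⟩ := hy
  have hp' : f₀ xm ≤ f₀ p := by
    have hconv : Convex ℝ {z : X | f₀ xm ≤ f₀ z} := by
      intro y1 h1 y2 h2 a bb ha hb hab
      simp only [mem_setOf_eq, map_add, map_smul, smul_eq_mul]
      have h3 : f₀ xm = a * f₀ xm + bb * f₀ xm := by rw [← add_mul, hab, one_mul]
      have h4 := mul_le_mul_of_nonneg_left h1 ha
      have h5 := mul_le_mul_of_nonneg_left h2 hb
      linarith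
    exact convexHull_min (fun v hv => hmin v hv) hconv hp
  have hq' : 0 ≤ f₀ qq := by
    refine NNc.subset (M := {z : X | 0 ≤ f₀ z}) (by simp) ?_ ?_ ?_ hq
    · intro a ha bb hb; simp only [mem_setOf_eq, map_add]
      have := ha; have := hb; simp only [mem_setOf_eq] at *; linarith
    · intro t ht a ha; simp only [mem_setOf_eq, map_smul, smul_eq_mul]
      have := ha; simp only [mem_setOf_eq] at this; positivity
    · exact fun ρ hρ => hR ρ hρ
  rw [map_add]
  linarith

end LP

section ConeOf

lemma coneOf_coe (q : ℕ) (F : Finset (Fin q → ℝ)) : coneOf (↑F) = NNc F := by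
  apply Set.Subset.antisymm
  · intro x hx
    rcases (Set.mem_insert_iff.1 hx) with rfl | ⟨l, hl, bb, hbb, rfl⟩
    · exact NNc.zero_mem F
    · have hbmem : bb ∈ NNc F :=
        convexHull_min (fun g hg => NNc.gen_mem (Finset.mem_coe.1 hg)) (NNc.convex F) hbb
      exact NNc.smul_mem hl hbmem
  · rintro x ⟨c, hc, rfl⟩
    set l := ∑ g ∈ F, c g with hldef
    have hl : 0 ≤ l := Finset.sum_nonneg (fun g _ => hc g)
    rcases eq_or_lt_of_le hl with hl0 | hlpos
    · apply Set.mem_insert_iff.2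
      left
      refine Finset.sum_eq_zero (fun g hg => ?_)
      have : c g = 0 := by
        have := (Finset.sum_eq_zero_iff_of_nonneg (fun g _ => hc g)).1 hl0.symm g hg
        exact this
      rw [this, zero_smul]
    · apply Set.mem_insert_iff.2
      right
      refine ⟨l, hl, l⁻¹ • ∑ g ∈ F, c g • g, ?_, (smul_inv_smul₀ (ne_of_gt hlpos) _).symm⟩
      have hcm : F.centerMass c id = l⁻¹ • ∑ g ∈ F, c g • g := by
        rw [Finset.centerMass]
        simp only [id_eq, hldef]
      rw [← hcm]
      exact Finset.centerMass_mem_convexHull _ (fun g _ => hc g) (hldef ▸ hlpos)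
        (fun g hg => Finset.mem_coe.2 hg)

end ConeOf

section VLP

variable {m n q r : ℕ} (A : Matrix (Fin m) (Fin n) ℝ) (b : Fin m → ℝ)
  (P : Matrix (Fin q) (Fin n) ℝ) (Z : Matrix (Fin q) (Fin r) ℝ)

/-- the scalarizing functional `y ↦ Σ_j (Zᵀ y)_j` -/
noncomputable def wl : (Fin q → ℝ) →ₗ[ℝ] ℝ :=
  (∑ j : Fin r, LinearMap.proj j).comp Z.transpose.mulVecLin

lemma wl_apply (y : Fin q → ℝ) : wl Z y = ∑ j, Z.transpose.mulVec y j := by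
  simp only [wl, LinearMap.comp_apply, LinearMap.sum_apply, LinearMap.proj_apply,
    Matrix.mulVecLin_apply]

lemma wl_nonneg {y : Fin q → ℝ} (h : ∀ j, 0 ≤ Z.transpose.mulVec y j) : 0 ≤ wl Z y := by
  rw [wl_apply]
  exact Finset.sum_nonneg (fun j _ => h j)

lemma wl_eq_zero (hker : ∀ y : Fin q → ℝ, Z.transpose.mulVec y = 0 → y = 0)
    {y : Fin q → ℝ} (h : ∀ j, 0 ≤ Z.transpose.mulVec y j) (h0 : wl Z y = 0) : y = 0 := by
  rw [wl_apply] at h0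
  refine hker y (funext fun j => ?_)
  have := (Finset.sum_eq_zero_iff_of_nonneg (fun j _ => h j)).1 h0 j (Finset.mem_univ j)
  simpa using this

lemma wl_pos (hker : ∀ y : Fin q → ℝ, Z.transpose.mulVec y = 0 → y = 0)
    {y : Fin q → ℝ} (h : ∀ j, 0 ≤ Z.transpose.mulVec y j) (h0 : y ≠ 0) : 0 < wl Z y := by
  rcases eq_or_lt_of_le (wl_nonneg Z h) with he | hlt
  · exact absurd (wl_eq_zero Z hker h he.symm) h0
  · exact hlt

/-- key existence-of-minimizer lemma, by scalarized linear programming over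
the polyhedron `{(x, c) : Ax ≥ β, Zᵀc ≥ 0, Zᵀ(Px + c) ≤ Zᵀ(P xu)}`. -/
lemma exists_min (hker : ∀ y : Fin q → ℝ, Z.transpose.mulVec y = 0 → y = 0)
    (hT0 : ∀ (x : Fin n → ℝ) (cc : Fin q → ℝ), (∀ i, 0 ≤ A.mulVec x i) →
      (∀ j, 0 ≤ Z.transpose.mulVec cc j) →
      (∀ j, Z.transpose.mulVec (P.mulVec x + cc) j ≤ 0) → P.mulVec x + cc = 0)
    (β : Fin m → ℝ) (xu : Fin n → ℝ) (hxu : ∀ i, β i ≤ A.mulVec xu i) :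
    ∃ xs : Fin n → ℝ, (∀ i, β i ≤ A.mulVec xs i) ∧
      (P.mulVec xs ∉ (P.mulVec '' {z | ∀ i, β i ≤ A.mulVec z i}) +
        ({y | ∀ j, 0 ≤ Z.transpose.mulVec y j} \ {0})) ∧
      (∀ j, Z.transpose.mulVec (P.mulVec xs) j ≤ Z.transpose.mulVec (P.mulVec xu) j) := by
  classical
  set XX := (Fin n → ℝ) × (Fin q → ℝ)
  set fA : Fin m → (XX →ₗ[ℝ] ℝ) := fun i =>
    (LinearMap.proj i).comp (A.mulVecLin.comp (LinearMap.fst ℝ _ _)) with hfA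
  set fZc : Fin r → (XX →ₗ[ℝ] ℝ) := fun j =>
    (LinearMap.proj j).comp (Z.transpose.mulVecLin.comp (LinearMap.snd ℝ _ _)) with hfZc
  set fZpc : Fin r → (XX →ₗ[ℝ] ℝ) := fun j =>
    (LinearMap.proj j).comp (Z.transpose.mulVecLin.comp
      (P.mulVecLin.comp (LinearMap.fst ℝ _ _) + (LinearMap.snd ℝ _ _))) with hfZpc
  set f : (Fin m ⊕ (Fin r ⊕ Fin r)) → (XX →ₗ[ℝ] ℝ) :=
    Sum.elim fA (Sum.elim fZc (fun j => - fZpc j)) with hf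
  set βv : (Fin m ⊕ (Fin r ⊕ Fin r)) → ℝ :=
    Sum.elim β (Sum.elim 0 (fun j => - Z.transpose.mulVec (P.mulVec xu) j)) with hβv
  have hfAev : ∀ (p : XX) i, fA i p = A.mulVec p.1 i := fun p i => rfl
  have hfZcev : ∀ (p : XX) j, fZc j p = Z.transpose.mulVec p.2 j := fun p j => rfl
  have hfZpcev : ∀ (p : XX) j,
      fZpc j p = Z.transpose.mulVec (P.mulVec p.1 + p.2) j := fun p j => rfl
  have hEmem : ∀ p : XX, (∀ i, βv i ≤ f i p) ↔
      ((∀ i, β i ≤ A.mulVec p.1 i) ∧ (∀ j, 0 ≤ Z.transpose.mulVec p.2 j) ∧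
        (∀ j, Z.transpose.mulVec (P.mulVec p.1 + p.2) j ≤
          Z.transpose.mulVec (P.mulVec xu) j)) := by
    intro p
    constructor
    · intro hp
      refine ⟨fun i => hp (Sum.inl i), fun j => by simpa [hf, hβv, hfZcev] using hp (Sum.inr (Sum.inl j)),
        fun j => ?_⟩
      have := hp (Sum.inr (Sum.inr j))
      simp only [hf, hβv, Sum.elim_inr, LinearMap.neg_apply] at this
      have h2 : fZpc j p = Z.transpose.mulVec (P.mulVec p.1 + p.2) j := hfZpcev p j
      rw [h2] at this
      linarith
    · rintro ⟨h1, h2, h3⟩ i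
      match i with
      | Sum.inl i => exact h1 i
      | Sum.inr (Sum.inl j) => simpa [hf, hβv, hfZcev] using h2 j
      | Sum.inr (Sum.inr j) =>
        simp only [hf, hβv, Sum.elim_inr, LinearMap.neg_apply]
        have he : fZpc j p = Z.transpose.mulVec (P.mulVec p.1 + p.2) j := hfZpcev p j
        rw [he]
        linarith [h3 j]
  obtain ⟨V, R, hVS, hVne, hrep, hRrec⟩ := polyMW f βv
    (gens_prod (gens_prod (gens_pi n) (gens_pi q)) gens_real)
  set f₀ : XX →ₗ[ℝ] ℝ :=
    (wl Z).comp (P.mulVecLin.comp (LinearMap.fst ℝ _ _) + (LinearMap.snd ℝ _ _)) with hf₀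
  have hf₀ev : ∀ p : XX, f₀ p = wl Z (P.mulVec p.1 + p.2) := fun p => rfl
  have hEne : {p : XX | ∀ i, βv i ≤ f i p}.Nonempty := by
    refine ⟨(xu, 0), (hEmem (xu, 0)).2 ⟨hxu, ?_, ?_⟩⟩
    · intro j; simp [Matrix.mulVec_zero]
    · intro j; simp
  have hR0 : ∀ ρ ∈ R, 0 ≤ f₀ ρ := by
    intro ρ hρ
    have hρm : ρ ∈ NNc R := NNc.gen_mem hρ
    rw [hRrec] at hρm
    have h1 : ∀ i, 0 ≤ A.mulVec ρ.1 i := fun i => hρm (Sum.inl i)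
    have h2 : ∀ j, 0 ≤ Z.transpose.mulVec ρ.2 j := fun j => by
      simpa [hf, hfZcev] using hρm (Sum.inr (Sum.inl j))
    have h3 : ∀ j, Z.transpose.mulVec (P.mulVec ρ.1 + ρ.2) j ≤ 0 := fun j => by
      have := hρm (Sum.inr (Sum.inr j))
      simp only [hf, Sum.elim_inr, LinearMap.neg_apply] at this
      have he : fZpc j ρ = Z.transpose.mulVec (P.mulVec ρ.1 + ρ.2) j := hfZpcev ρ j
      rw [he] at this
      linarith
    have := hT0 ρ.1 ρ.2 h1 h2 h3
    rw [hf₀ev, this, map_zero]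
  obtain ⟨xm, hxmV, hmin⟩ := lp_attain V R _ hrep (hVne hEne) f₀ hR0
  have hxmE := hVS (Finset.mem_coe.2 hxmV)
  rw [Set.mem_setOf_eq, hEmem] at hxmE
  obtain ⟨hE1, hE2, hE3⟩ := hxmE
  -- the C-component of the optimum is 0
  have hc0 : xm.2 = 0 := by
    have hmem : (xm.1, (0 : Fin q → ℝ)) ∈ {p : XX | ∀ i, βv i ≤ f i p} := by
      rw [Set.mem_setOf_eq, hEmem]
      refine ⟨hE1, fun j => by simp [Matrix.mulVec_zero], fun j => ?_⟩
      have := hE3 j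
      rw [Matrix.mulVec_add] at this ⊢
      have h2 := hE2 j
      rw [Matrix.mulVec_zero]
      simp only [Pi.add_apply, Pi.zero_apply] at this ⊢
      linarith
    have hle := hmin _ hmem
    rw [hf₀ev, hf₀ev] at hle
    simp only [map_add] at hle
    have hwc : wl Z xm.2 ≤ 0 := by
      rw [map_zero, add_zero] at hle
      linarith
    have hwc2 : 0 ≤ wl Z xm.2 := wl_nonneg Z hE2
    exact wl_eq_zero Z hker hE2 (le_antisymm hwc hwc2)
  refine ⟨xm.1, hE1, ?_, fun j => ?_⟩
  · -- minimality
    rintro ⟨pz, ⟨z, hz, rfl⟩, cc, ⟨hccC, hcc0⟩, heq⟩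
    have hcc0' : cc ≠ 0 := by simpa using hcc0
    have hzE : ((z, (0 : Fin q → ℝ)) : XX) ∈ {p : XX | ∀ i, βv i ≤ f i p} := by
      rw [Set.mem_setOf_eq, hEmem]
      refine ⟨hz, fun j => by simp [Matrix.mulVec_zero], fun j => ?_⟩
      have h3 := hE3 j
      rw [Matrix.mulVec_add] at h3
      rw [Matrix.mulVec_add, Matrix.mulVec_zero]
      have hPz : P.mulVec z = P.mulVec xm.1 - cc := eq_sub_of_add_eq heq
      rw [hPz, Matrix.mulVec_sub]
      have hccj := hccC j
      rw [hc0, Matrix.mulVec_zero] at h3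
      simp only [Pi.add_apply, Pi.zero_apply, Pi.sub_apply] at h3 ⊢
      linarith
    have hle := hmin _ hzE
    rw [hf₀ev, hf₀ev, hc0] at hle
    simp only [add_zero] at hle
    have hPz : P.mulVec z = P.mulVec xm.1 - cc := eq_sub_of_add_eq heq
    rw [hPz, map_sub] at hle
    have hwcc : 0 < wl Z cc := wl_pos Z hker hccC hcc0'
    linarith
  · have := hE3 j
    rw [hc0] at this
    simpa using this

end VLP

theorem vlp_solution_existence_iff
    (m n q r : ℕ) (A : Matrix (Fin m) (Fin n) ℝ) (b : Fin m → ℝ)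
    (P : Matrix (Fin q) (Fin n) ℝ) (Z : Matrix (Fin q) (Fin r) ℝ)
    (hker : ∀ y : Fin q → ℝ, Z.transpose.mulVec y = 0 → y = 0)
    (C : Set (Fin q → ℝ)) (hC : C = {y | ∀ j, 0 ≤ Z.transpose.mulVec y j})
    (S : Set (Fin n → ℝ)) (hS : S = {x | ∀ i, b i ≤ A.mulVec x i})
    (UI : Set (Fin q → ℝ)) (hUI : UI = (P.mulVec '' S) + C)
    (L : Set (Fin q → ℝ)) (hL : L = recCone UI ∩ (-recCone UI)) :
    (∃ Spoi Sdir : Set (Fin n → ℝ), IsVLPSolution A b P C Spoi Sdir) ↔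
      (S.Nonempty ∧ L ∩ C = {0}) := by
  classical
  subst hC hS hUI hL
  set Cs := {y : Fin q → ℝ | ∀ j, 0 ≤ Z.transpose.mulVec y j} with hCs
  set Sset := {x : Fin n → ℝ | ∀ i, b i ≤ A.mulVec x i} with hSset
  set S0set := {x : Fin n → ℝ | ∀ i, (0:ℝ) ≤ A.mulVec x i} with hS0set
  have hC0 : (0 : Fin q → ℝ) ∈ Cs := fun j => by simp [Matrix.mulVec_zero]
  have hCadd : ∀ a ∈ Cs, ∀ b' ∈ Cs, a + b' ∈ Cs := by
    intro a ha b' hb' j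
    have h1 := ha j; have h2 := hb' j
    rw [Matrix.mulVec_add]
    simp only [Pi.add_apply]
    linarith
  have hCsmul : ∀ t : ℝ, 0 ≤ t → ∀ a ∈ Cs, t • a ∈ Cs := by
    intro t ht a ha j
    have h1 := ha j
    rw [Matrix.mulVec_smul]
    simp only [Pi.smul_apply, smul_eq_mul]
    positivity
  constructor
  · rintro ⟨Spoi, Sdir, hfin1, hfin2, hne, hfeas, hdirfeas, hminpt, hmindir, heq⟩
    obtain ⟨x₀, hx₀⟩ := hne
    have hx₀S : x₀ ∈ Sset := hfeas x₀ hx₀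
    refine ⟨⟨x₀, hx₀S⟩, ?_⟩
    apply Set.eq_singleton_iff_unique_mem.2
    constructor
    · refine ⟨⟨fun y hy => by simpa using hy, ?_⟩, hC0⟩
      rw [Set.mem_neg, neg_zero]
      intro y hy; simpa using hy
    · rintro d ⟨⟨hd1, hd2⟩, hdC⟩
      rw [Set.mem_neg] at hd2
      have hPx₀ : P.mulVec x₀ ∈ (P.mulVec '' Sset) + Cs :=
        ⟨P.mulVec x₀, ⟨x₀, hx₀S, rfl⟩, 0, hC0, add_zero _⟩
      obtain ⟨pz, ⟨z, hzS, rfl⟩, cc, hccC, heq2⟩ := hd2 _ hPx₀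
      -- heq2 : P z + cc = P x₀ + (-d)
      by_cases hcd : cc + d = 0
      · have hcceq : cc = -d := eq_neg_of_add_eq_zero_left hcd
        apply hker
        funext j
        have h1 := hdC j
        have h2 := hccC j
        rw [hcceq, Matrix.mulVec_neg] at h2
        simp only [Pi.neg_apply] at h2
        simp only [Pi.zero_apply]
        linarith
      · exfalso
        apply hminpt x₀ hx₀
        refine ⟨P.mulVec z, ⟨z, hzS, rfl⟩, cc + d, ⟨hCadd cc hccC d hdC, by simpa using hcd⟩, ?_⟩
        have heq2' : P.mulVec z + cc = P.mulVec x₀ + (-d) := heq2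
        show P.mulVec z + (cc + d) = P.mulVec x₀
        have h5 : P.mulVec z + (cc + d) = (P.mulVec z + cc) + d := by abel
        rw [h5, heq2']
        abel
  · rintro ⟨hSne, hLC⟩
    -- the key "no lines in C" consequence
    have hT0 : ∀ (x : Fin n → ℝ) (cc : Fin q → ℝ), (∀ i, 0 ≤ A.mulVec x i) →
        (∀ j, 0 ≤ Z.transpose.mulVec cc j) →
        (∀ j, Z.transpose.mulVec (P.mulVec x + cc) j ≤ 0) → P.mulVec x + cc = 0 := by
      intro x cc h1 h2 h3
      have hdC : -(P.mulVec x + cc) ∈ Cs := by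
        intro j
        rw [Matrix.mulVec_neg]
        simp only [Pi.neg_apply]
        linarith [h3 j]
      have hCrec : ∀ dd ∈ Cs, dd ∈ recCone ((P.mulVec '' Sset) + Cs) := by
        intro dd hdd y hy
        obtain ⟨pz, hpz, cc', hcc', rfl⟩ := hy
        exact ⟨pz, hpz, cc' + dd, hCadd cc' hcc' dd hdd, (add_assoc _ _ _).symm⟩
      have hrec2 : (P.mulVec x + cc) ∈ recCone ((P.mulVec '' Sset) + Cs) := by
        intro y hy
        obtain ⟨pz, ⟨z, hzS, rfl⟩, cc', hcc', rfl⟩ := hy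
        refine ⟨P.mulVec (z + x), ⟨z + x, ?_, rfl⟩, cc' + cc, hCadd _ hcc' _ h2, ?_⟩
        · intro i
          have ha1 := hzS i
          have ha2 := h1 i
          rw [Matrix.mulVec_add]
          simp only [Pi.add_apply]
          linarith
        · rw [Matrix.mulVec_add]
          funext k; simp only [Pi.add_apply]; ring
      have hdm : -(P.mulVec x + cc) ∈
          (recCone ((P.mulVec '' Sset) + Cs) ∩ -recCone ((P.mulVec '' Sset) + Cs)) ∩ Cs := by
        refine ⟨⟨hCrec _ hdC, ?_⟩, hdC⟩
        rw [Set.mem_neg, neg_neg]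
        exact hrec2
      rw [hLC] at hdm
      have : -(P.mulVec x + cc) = 0 := hdm
      exact neg_eq_zero.1 this
    -- Minkowski–Weyl representation of the feasible set
    obtain ⟨V, R, hVS, hVne, hrep, hRrec⟩ :=
      polyMW (fun i : Fin m => (LinearMap.proj i).comp A.mulVecLin) b
        (gens_prod (gens_pi n) gens_real)
    have hset1 : {x : Fin n → ℝ | ∀ i, b i ≤ ((LinearMap.proj i).comp A.mulVecLin) x} = Sset := rfl
    have hset2 : {x : Fin n → ℝ | ∀ i, (0:ℝ) ≤ ((LinearMap.proj i).comp A.mulVecLin) x} = S0set := rfl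
    rw [hset1] at hVS hVne hrep
    rw [hset2] at hRrec
    -- choose minimizer points dominating the vertices
    have hptE : ∀ v : Fin n → ℝ, ∃ xs, v ∈ V →
        ((∀ i, b i ≤ A.mulVec xs i) ∧
          (P.mulVec xs ∉ (P.mulVec '' {z | ∀ i, b i ≤ A.mulVec z i}) + (Cs \ {0})) ∧
          (∀ j, Z.transpose.mulVec (P.mulVec xs) j ≤ Z.transpose.mulVec (P.mulVec v) j)) := by
      intro v
      by_cases hv : v ∈ V
      · obtain ⟨xs, h⟩ := exists_min A P Z hker hT0 b v (hVS (Finset.mem_coe.2 hv))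
        exact ⟨xs, fun _ => h⟩
      · exact ⟨0, fun h => absurd h hv⟩
    choose pt hpt using hptE
    -- choose minimizer directions dominating the extreme rays
    have hdirE : ∀ ρ : Fin n → ℝ, ∃ xs, ρ ∈ R →
        ((∀ i, (0:ℝ) ≤ A.mulVec xs i) ∧
          (P.mulVec xs ∉ (P.mulVec '' {z | ∀ i, (0:ℝ) ≤ A.mulVec z i}) + (Cs \ {0})) ∧
          (∀ j, Z.transpose.mulVec (P.mulVec xs) j ≤ Z.transpose.mulVec (P.mulVec ρ) j)) := by
      intro ρ
      by_cases hρ : ρ ∈ R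
      · have hρ0 : ρ ∈ S0set := by
          rw [← hRrec]
          exact NNc.gen_mem hρ
        obtain ⟨xs, h⟩ := exists_min A P Z hker hT0 (fun _ => (0:ℝ)) ρ hρ0
        exact ⟨xs, fun _ => h⟩
      · exact ⟨0, fun h => absurd h hρ⟩
    choose dir hdir using hdirE
    set Rg := R.filter (fun ρ => P.mulVec (dir ρ) ≠ 0) with hRg
    refine ⟨↑(V.image pt), ↑(Rg.image dir), Finset.finite_toSet _, Finset.finite_toSet _,
      ?_, ?_, ?_, ?_, ?_, ?_⟩
    · -- nonempty
      have : V.Nonempty := hVne hSne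
      exact Finset.coe_nonempty.2 (this.image pt)
    · -- feasibility of points
      intro x hx
      obtain ⟨v, hv, rfl⟩ := Finset.mem_image.1 (Finset.mem_coe.1 hx)
      exact (hpt v hv).1
    · -- feasibility of directions
      intro x hx
      obtain ⟨ρ, hρ, rfl⟩ := Finset.mem_image.1 (Finset.mem_coe.1 hx)
      rw [hRg, Finset.mem_filter] at hρ
      refine ⟨?_, (hdir ρ hρ.1).1⟩
      intro h0
      apply hρ.2
      rw [h0, Matrix.mulVec_zero]
    · -- minimality of points
      intro x hx
      obtain ⟨v, hv, rfl⟩ := Finset.mem_image.1 (Finset.mem_coe.1 hx)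
      exact (hpt v hv).2.1
    · -- minimality of directions
      intro x hx
      obtain ⟨ρ, hρ, rfl⟩ := Finset.mem_image.1 (Finset.mem_coe.1 hx)
      rw [hRg, Finset.mem_filter] at hρ
      exact (hdir ρ hρ.1).2.1
    · -- the infimizer property
      have hptCs : ∀ v ∈ V, P.mulVec v - P.mulVec (pt v) ∈ Cs := by
        intro v hv j
        have := (hpt v hv).2.2 j
        rw [Matrix.mulVec_sub]
        simp only [Pi.sub_apply]
        linarith
      have hdirCs : ∀ ρ ∈ R, P.mulVec ρ - P.mulVec (dir ρ) ∈ Cs := by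
        intro ρ hρ j
        have := (hdir ρ hρ).2.2 j
        rw [Matrix.mulVec_sub]
        simp only [Pi.sub_apply]
        linarith
      have hPcoe : (P.mulVec '' ↑(Rg.image dir)) = ↑((Rg.image dir).image P.mulVec) := by
        simp [Finset.coe_image, Set.image_image]
      apply Set.Subset.antisymm
      · rintro y ⟨w, ⟨u1, hu1, u2, hu2, rfl⟩, cc, hcc, rfl⟩
        have hSconv : Convex ℝ Sset := by
          intro y1 h1 y2 h2 a bb ha hb hab i
          have ha1 := mul_le_mul_of_nonneg_left (h1 i) ha
          have ha2 := mul_le_mul_of_nonneg_left (h2 i) hb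
          have h3 : b i = a * b i + bb * b i := by rw [← add_mul, hab, one_mul]
          rw [Matrix.mulVec_add, Matrix.mulVec_smul, Matrix.mulVec_smul]
          simp only [Pi.add_apply, Pi.smul_apply, smul_eq_mul]
          linarith
        have himconv : Convex ℝ (P.mulVec '' Sset) := by
          have : P.mulVec '' Sset = P.mulVecLin '' Sset := by
            apply congrArg (· '' Sset)
            funext x
            rw [Matrix.mulVecLin_apply]
          rw [this]
          exact hSconv.linear_image P.mulVecLin
        have hu1' : u1 ∈ P.mulVec '' Sset := by
          refine convexHull_min ?_ himconv hu1
          intro p hp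
          obtain ⟨x, hx, rfl⟩ := hp
          obtain ⟨v, hv, rfl⟩ := Finset.mem_image.1 (Finset.mem_coe.1 hx)
          exact ⟨pt v, (hpt v hv).1, rfl⟩
        have hu2' : u2 ∈ P.mulVec '' S0set := by
          rw [hPcoe, coneOf_coe] at hu2
          refine NNc.subset (M := P.mulVec '' S0set) ?_ ?_ ?_ ?_ hu2
          · exact ⟨0, fun i => by simp [Matrix.mulVec_zero], Matrix.mulVec_zero _⟩
          · rintro a ⟨z1, hz1, rfl⟩ b' ⟨z2, hz2, rfl⟩
            refine ⟨z1 + z2, fun i => ?_, (Matrix.mulVec_add _ _ _)⟩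
            have := hz1 i; have := hz2 i
            rw [Matrix.mulVec_add]
            simp only [Pi.add_apply]
            linarith
          · rintro t ht a ⟨z1, hz1, rfl⟩
            refine ⟨t • z1, fun i => ?_, (Matrix.mulVec_smul _ _ _)⟩
            have := hz1 i
            rw [Matrix.mulVec_smul]
            simp only [Pi.smul_apply, smul_eq_mul]
            positivity
          · intro g hg
            obtain ⟨d0, hd0, rfl⟩ := Finset.mem_image.1 (Finset.mem_coe.1 hg)
            obtain ⟨ρ, hρ, rfl⟩ := Finset.mem_image.1 hd0
            rw [hRg, Finset.mem_filter] at hρ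
            exact ⟨dir ρ, (hdir ρ hρ.1).1, rfl⟩
        obtain ⟨z1, hz1, rfl⟩ := hu1'
        obtain ⟨z2, hz2, rfl⟩ := hu2'
        refine ⟨P.mulVec (z1 + z2), ⟨z1 + z2, fun i => ?_, rfl⟩, cc, hcc, ?_⟩
        · have := hz1 i; have := hz2 i
          rw [Matrix.mulVec_add]
          simp only [Pi.add_apply]
          linarith
        · rw [Matrix.mulVec_add]
      · rintro y ⟨pz, ⟨z, hzS, rfl⟩, cc, hccC, rfl⟩
        have hzS' : z ∈ Sset := hzS
        rw [hrep] at hzS'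
        obtain ⟨zv, hzv, zr, hzr, rfl⟩ := hzS'
        rw [Finset.convexHull_eq] at hzv
        obtain ⟨θ, hθ0, hθ1, hcm⟩ := hzv
        have hzveq : zv = ∑ v ∈ V, θ v • v := by
          rw [← hcm, Finset.centerMass, hθ1, inv_one, one_smul]
          simp only [id_eq]
        obtain ⟨κ, hκ0, hzreq⟩ := hzr
        have hPzv : P.mulVec zv = ∑ v ∈ V, θ v • P.mulVec v := by
          calc P.mulVec zv = P.mulVecLin zv := (Matrix.mulVecLin_apply _ _).symm
            _ = ∑ v ∈ V, θ v • P.mulVecLin v := by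
                rw [hzveq, map_sum]
                exact Finset.sum_congr rfl (fun v _ => map_smul _ _ _)
            _ = ∑ v ∈ V, θ v • P.mulVec v := by
                exact Finset.sum_congr rfl (fun v _ => by rw [Matrix.mulVecLin_apply])
        have hPzr : P.mulVec zr = ∑ ρ ∈ R, κ ρ • P.mulVec ρ := by
          calc P.mulVec zr = P.mulVecLin zr := (Matrix.mulVecLin_apply _ _).symm
            _ = ∑ ρ ∈ R, κ ρ • P.mulVecLin ρ := by
                rw [hzreq, map_sum]
                exact Finset.sum_congr rfl (fun ρ _ => map_smul _ _ _)
            _ = ∑ ρ ∈ R, κ ρ • P.mulVec ρ := by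
                exact Finset.sum_congr rfl (fun ρ _ => by rw [Matrix.mulVecLin_apply])
        set a1 := ∑ v ∈ V, θ v • P.mulVec (pt v) with ha1def
        set c1 := ∑ v ∈ V, θ v • (P.mulVec v - P.mulVec (pt v)) with hc1def
        have hsplit1 : P.mulVec zv = a1 + c1 := by
          rw [hPzv, ha1def, hc1def, ← Finset.sum_add_distrib]
          refine Finset.sum_congr rfl (fun v _ => ?_)
          rw [← smul_add]
          congr 1
          abel
        set a2full := ∑ ρ ∈ R, κ ρ • P.mulVec (dir ρ) with ha2fulldef
        set c2 := ∑ ρ ∈ R, κ ρ • (P.mulVec ρ - P.mulVec (dir ρ)) with hc2def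
        have hsplit2 : P.mulVec zr = a2full + c2 := by
          rw [hPzr, ha2fulldef, hc2def, ← Finset.sum_add_distrib]
          refine Finset.sum_congr rfl (fun ρ _ => ?_)
          rw [← smul_add]
          congr 1
          abel
        set a2 := ∑ ρ ∈ Rg, κ ρ • P.mulVec (dir ρ) with ha2def
        have ha2eq : a2full = a2 := by
          rw [ha2fulldef, ha2def, hRg]
          rw [← Finset.sum_filter_add_sum_filter_not R (fun ρ => P.mulVec (dir ρ) ≠ 0)]
          have : ∑ ρ ∈ R.filter (fun ρ => ¬ P.mulVec (dir ρ) ≠ 0), κ ρ • P.mulVec (dir ρ) = 0 := by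
            refine Finset.sum_eq_zero (fun ρ hρ => ?_)
            rw [Finset.mem_filter, not_not] at hρ
            rw [hρ.2, smul_zero]
          rw [this, add_zero]
        have ha1mem : a1 ∈ convexHull ℝ (P.mulVec '' ↑(V.image pt)) := by
          have hVne' : (0:ℝ) < ∑ v ∈ V, θ v := by rw [hθ1]; norm_num
          have hcm2 : V.centerMass θ (fun v => P.mulVec (pt v)) = a1 := by
            rw [Finset.centerMass, hθ1, inv_one, one_smul, ha1def]
          rw [← hcm2]
          refine Finset.centerMass_mem_convexHull _ (fun v hv => hθ0 v hv) hVne' ?_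
          intro v hv
          exact ⟨pt v, Finset.mem_coe.2 (Finset.mem_image_of_mem pt hv), rfl⟩
        have hc1mem : c1 ∈ Cs := by
          rw [hc1def]
          refine Finset.sum_induction _ (· ∈ Cs) (fun a' b' ha' hb' => hCadd a' ha' b' hb') hC0 ?_
          intro v hv
          exact hCsmul _ (hθ0 v hv) _ (hptCs v hv)
        have hc2mem : c2 ∈ Cs := by
          rw [hc2def]
          refine Finset.sum_induction _ (· ∈ Cs) (fun a' b' ha' hb' => hCadd a' ha' b' hb') hC0 ?_
          intro ρ hρ
          exact hCsmul _ (hκ0 ρ) _ (hdirCs ρ hρ)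
        have ha2mem : a2 ∈ coneOf (P.mulVec '' ↑(Rg.image dir)) := by
          rw [hPcoe, coneOf_coe, ha2def]
          refine NNc.sum_mem _ _ (fun ρ hρ => ?_)
          refine NNc.smul_mem (hκ0 ρ) (NNc.gen_mem ?_)
          exact Finset.mem_image_of_mem _ (Finset.mem_image_of_mem _ hρ)
        have hfin : P.mulVec (zv + zr) + cc = (a1 + a2) + ((c1 + c2) + cc) := by
          rw [Matrix.mulVec_add, hsplit1, hsplit2, ha2eq]
          abel
        show P.mulVec (zv + zr) + cc ∈ _
        rw [hfin]
        exact Set.add_mem_add (Set.add_mem_add ha1mem ha2mem)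
          (hCadd _ (hCadd _ hc1mem _ hc2mem) _ hccC)
end

section
/- Let (X_poi, X_dir) be an irredundant solution of the polyhedral projection problem computing the upper image 𝒫 of a feasible VLP with L ∩ C = {0} (L the lineality space of 𝒫, C the pointed polyhedral ordering cone). Then for every (x,y) ∈ X_poi, the point x is a minimizer of the VLP, i.e., y ∉ 𝒫 + C\{0}. -/
open Pointwise Set

/-- `(Xpoi, Xdir)` is a solution of the polyhedral projection problem associated
to the VLP `min Px s.t. Ax ≥ b` with ordering cone `{y : Zᵀy ≥ 0}`, computing
the upper image `UI`. -/
def IsPPSolution {m n q r : ℕ} (A : Matrix (Fin m) (Fin n) ℝ) (b : Fin m → ℝ)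
    (P : Matrix (Fin q) (Fin n) ℝ) (Z : Matrix (Fin q) (Fin r) ℝ)
    (UI : Set (Fin q → ℝ))
    (Xpoi Xdir : Set ((Fin n → ℝ) × (Fin q → ℝ))) : Prop :=
  Xpoi.Finite ∧ Xdir.Finite ∧ Xpoi.Nonempty ∧
  (∀ s ∈ Xpoi, (∀ i, b i ≤ A.mulVec s.1 i) ∧
    (∀ j, Z.transpose.mulVec (P.mulVec s.1) j ≤ Z.transpose.mulVec s.2 j)) ∧
  (∀ s ∈ Xdir, s ≠ 0 ∧ (∀ i, (0:ℝ) ≤ A.mulVec s.1 i) ∧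
    (∀ j, Z.transpose.mulVec (P.mulVec s.1) j ≤ Z.transpose.mulVec s.2 j)) ∧
  UI = convexHull ℝ (Prod.snd '' Xpoi) + coneOf (Prod.snd '' Xdir)

/-- An irredundant solution: no proper sub-pair is also a solution. -/
def IsIrredundantPPSolution {m n q r : ℕ} (A : Matrix (Fin m) (Fin n) ℝ)
    (b : Fin m → ℝ) (P : Matrix (Fin q) (Fin n) ℝ) (Z : Matrix (Fin q) (Fin r) ℝ)
    (UI : Set (Fin q → ℝ))
    (Xpoi Xdir : Set ((Fin n → ℝ) × (Fin q → ℝ))) : Prop :=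
  IsPPSolution A b P Z UI Xpoi Xdir ∧
  ∀ Vpoi Vdir, Vpoi ⊆ Xpoi → Vdir ⊆ Xdir →
    IsPPSolution A b P Z UI Vpoi Vdir → Vpoi = Xpoi ∧ Vdir = Xdir

namespace ConeAux
variable {q : ℕ}

/-- nonnegative combinations over a finset of vectors -/
def fg (T : Finset (Fin q → ℝ)) : Set (Fin q → ℝ) :=
  {x | ∃ l : (Fin q → ℝ) → ℝ, (∀ e ∈ T, 0 ≤ l e) ∧ x = ∑ e ∈ T, l e • e}

lemma fg_mono {T T' : Finset (Fin q → ℝ)} (h : T' ⊆ T) : fg T' ⊆ fg T := by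
  rintro x ⟨l, hl, rfl⟩
  refine ⟨fun e => if e ∈ T' then l e else 0, fun e he => ?_, ?_⟩
  · beta_reduce
    split_ifs with h'
    · exact hl e h'
    · exact le_refl 0
  · beta_reduce
    rw [← Finset.sum_subset h (fun e _ he' => by simp [if_neg he'])]
    exact Finset.sum_congr rfl fun e he => by simp [if_pos he]

lemma coneOf_eq_fg {D : Set (Fin q → ℝ)} (hD : D.Finite) :
    coneOf D = fg hD.toFinset := by
  ext x
  constructor
  · rintro (rfl | ⟨l, hl, b, hb, rfl⟩)
    · exact ⟨0, fun e _ => le_refl 0, by simp⟩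
    · rw [← hD.coe_toFinset, Finset.convexHull_eq] at hb
      obtain ⟨w, hw0, hw1, hwx⟩ := hb
      refine ⟨fun e => l * w e, fun e he => mul_nonneg hl (hw0 e he), ?_⟩
      rw [← hwx, Finset.centerMass_eq_of_sum_1 _ _ hw1, Finset.smul_sum]
      exact Finset.sum_congr rfl fun e he => by simp [smul_smul]
  · rintro ⟨l, hl, rfl⟩
    set T := hD.toFinset
    by_cases hL : ∑ e ∈ T, l e = 0
    · have : ∀ e ∈ T, l e • e = 0 := by
        intro e he
        have := (Finset.sum_eq_zero_iff_of_nonneg hl).mp hL e he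
        rw [this, zero_smul]
      rw [Finset.sum_eq_zero this]
      exact mem_insert _ _
    · have hLpos : 0 < ∑ e ∈ T, l e :=
        lt_of_le_of_ne (Finset.sum_nonneg hl) (Ne.symm hL)
      refine mem_insert_of_mem _ ⟨∑ e ∈ T, l e, le_of_lt hLpos, T.centerMass l id, ?_, ?_⟩
      · rw [← hD.coe_toFinset]
        exact T.centerMass_mem_convexHull hl hLpos (fun i hi => Finset.mem_coe.mpr hi)
      · rw [Finset.centerMass, smul_smul, mul_inv_cancel₀ hL, one_smul]
        rfl

/-- conic Carathéodory: reduce to a linearly independent subset -/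
lemma caratheodory : ∀ (T : Finset (Fin q → ℝ)), ∀ x ∈ fg T,
    ∃ T' ⊆ T, (LinearIndependent ℝ (fun e : T' => (e : Fin q → ℝ))) ∧ x ∈ fg T' := by
  intro T
  induction T using Finset.strongInduction with
  | _ T ih =>
    intro x hx
    by_cases hdep : LinearIndependent ℝ (fun e : T => (e : Fin q → ℝ))
    · exact ⟨T, Finset.Subset.refl T, hdep, hx⟩
    obtain ⟨l, hl, rfl⟩ := hx
    by_cases hz : ∃ e ∈ T, l e = 0
    · obtain ⟨e0, he0, hle0⟩ := hz
      have hx' : ∑ e ∈ T, l e • e ∈ fg (T.erase e0) := by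
        refine ⟨l, fun e he => hl e (Finset.mem_of_mem_erase he), ?_⟩
        rw [← Finset.add_sum_erase T _ he0, hle0, zero_smul, zero_add]
      obtain ⟨T', hT', hind, hmem⟩ :=
        ih (T.erase e0) (Finset.erase_ssubset he0) _ hx'
      exact ⟨T', hT'.trans (Finset.erase_subset _ _), hind, hmem⟩
    push_neg at hz
    -- get a dependence relation with some positive coefficient
    obtain ⟨g, hg0, i1, hi1⟩ := Fintype.not_linearIndependent_iff.mp hdep
    have hgpos : ∃ g : {x // x ∈ T} → ℝ, ∑ i, g i • (i : Fin q → ℝ) = 0 ∧ ∃ i, 0 < g i := by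
      rcases lt_or_gt_of_ne hi1 with h | h
      · exact ⟨-g, by
          have h2 : ∑ i : {x // x ∈ T}, (-g) i • (i : Fin q → ℝ) =
              -∑ i : {x // x ∈ T}, g i • (i : Fin q → ℝ) := by simp [neg_smul]
          rw [h2, hg0, neg_zero], i1, by simpa using h⟩
      · exact ⟨g, hg0, i1, h⟩
    obtain ⟨g, hg0, hpos⟩ := hgpos
    -- extend g to all vectors
    classical
    set ghat : (Fin q → ℝ) → ℝ := fun e => if h : e ∈ T then g ⟨e, h⟩ else 0 with hghat
    have hgsum : ∑ e ∈ T, ghat e • e = 0 := by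
      rw [← hg0, ← Finset.sum_coe_sort T (fun e => ghat e • e)]
      exact Finset.sum_congr rfl fun i _ => by simp [hghat, i.2]
    -- minimize ratio over positive g entries
    obtain ⟨i0, hi0mem, hi0min⟩ := Finset.exists_min_image
      (Finset.univ.filter (fun i : {x // x ∈ T} => 0 < g i))
      (fun i => l (i : Fin q → ℝ) / g i)
      ⟨hpos.choose, by simp [hpos.choose_spec]⟩
    have hgi0 : 0 < g i0 := (Finset.mem_filter.mp hi0mem).2
    set t := l (i0 : Fin q → ℝ) / g i0 with ht
    have htnn : 0 ≤ t := div_nonneg (hl _ i0.2) hgi0.le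
    set l' : (Fin q → ℝ) → ℝ := fun e => l e - t * ghat e with hl'def
    have hl'nn : ∀ e ∈ T, 0 ≤ l' e := by
      intro e he
      have hge : ghat e = g ⟨e, he⟩ := by simp [hghat, he]
      rcases le_or_gt (ghat e) 0 with h | h
      · have h2 : t * ghat e ≤ 0 := mul_nonpos_of_nonneg_of_nonpos htnn h
        have := hl e he
        simp only [hl'def]
        linarith
      · have hmin := hi0min ⟨e, he⟩
          (Finset.mem_filter.mpr ⟨Finset.mem_univ _, by rw [← hge]; exact h⟩)
        rw [← hge] at hmin
        have h3 : t * ghat e ≤ l e := (le_div_iff₀ h).mp hmin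
        simp only [hl'def]
        linarith
    have hzero : ∑ e ∈ T, (t * ghat e) • e = 0 := by
      have : ∀ e ∈ T, (t * ghat e) • e = t • (ghat e • e) := fun e _ => by
        rw [smul_smul]
      rw [Finset.sum_congr rfl this, ← Finset.smul_sum, hgsum, smul_zero]
    have hsum' : ∑ e ∈ T, l e • e = ∑ e ∈ T, l' e • e := by
      simp only [hl'def, sub_smul]
      rw [Finset.sum_sub_distrib, hzero, sub_zero]
    have hl'i0 : l' (i0 : Fin q → ℝ) = 0 := by
      have : ghat (i0 : Fin q → ℝ) = g i0 := by simp [hghat, i0.2]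
      simp only [hl'def, this, ht]
      field_simp
      ring
    have hx' : ∑ e ∈ T, l e • e ∈ fg (T.erase (i0 : Fin q → ℝ)) := by
      refine ⟨l', fun e he => hl'nn e (Finset.mem_of_mem_erase he), ?_⟩
      rw [hsum', ← Finset.add_sum_erase T _ i0.2, hl'i0, zero_smul, zero_add]
    obtain ⟨T', hT', hind, hmem⟩ :=
      ih (T.erase (i0 : Fin q → ℝ)) (Finset.erase_ssubset i0.2) _ hx'
    exact ⟨T', hT'.trans (Finset.erase_subset _ _), hind, hmem⟩

/-- the linear map sending coefficients to the combination -/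
def phi (T : Finset (Fin q → ℝ)) : ({x // x ∈ T} → ℝ) →ₗ[ℝ] (Fin q → ℝ) where
  toFun l := ∑ i : {x // x ∈ T}, l i • (i : Fin q → ℝ)
  map_add' a b := by simp [add_smul, Finset.sum_add_distrib]
  map_smul' c a := by simp [smul_smul, Finset.smul_sum]

lemma fg_eq_image (T : Finset (Fin q → ℝ)) :
    fg T = phi T '' {l | ∀ i, 0 ≤ l i} := by
  classical
  ext x
  constructor
  · rintro ⟨l, hl, rfl⟩
    refine ⟨fun i => l (i : Fin q → ℝ), fun i => hl _ i.2, ?_⟩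
    show ∑ i : {x // x ∈ T}, l (i : Fin q → ℝ) • (i : Fin q → ℝ) = _
    rw [← Finset.sum_coe_sort T (fun e => l e • e)]
  · rintro ⟨l, hl, rfl⟩
    refine ⟨fun e => if h : e ∈ T then l ⟨e, h⟩ else 0, fun e he => by simp [he, hl _], ?_⟩
    show phi T l = ∑ e ∈ T, (if h : e ∈ T then l ⟨e, h⟩ else 0) • e
    rw [← Finset.sum_coe_sort T (fun e => (if h : e ∈ T then l ⟨e, h⟩ else 0) • e)]
    exact Finset.sum_congr rfl fun i _ => by simp [i.2]

lemma isClosed_fg {T : Finset (Fin q → ℝ)}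
    (hind : LinearIndependent ℝ (fun e : {x // x ∈ T} => (e : Fin q → ℝ))) :
    IsClosed (fg T) := by
  rw [fg_eq_image]
  have hker : LinearMap.ker (phi T) = ⊥ := by
    rw [LinearMap.ker_eq_bot']
    intro l hl
    have := Fintype.linearIndependent_iff.mp hind l hl
    funext i; exact this i
  have hemb := LinearMap.isClosedEmbedding_of_injective hker
  refine hemb.isClosedMap _ ?_
  have : {l : {x // x ∈ T} → ℝ | ∀ i, 0 ≤ l i} = ⋂ i, {l | 0 ≤ l i} := by
    ext l; simp [mem_iInter]
  rw [this]
  exact isClosed_iInter fun i => isClosed_le continuous_const (continuous_apply i)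

lemma isClosed_fg_all (T : Finset (Fin q → ℝ)) : IsClosed (fg T) := by
  have : fg T = ⋃ T' ∈ {T' : Finset (Fin q → ℝ) | T' ⊆ T ∧
      LinearIndependent ℝ (fun e : {x // x ∈ T'} => (e : Fin q → ℝ))}, fg T' := by
    ext x
    simp only [mem_iUnion, mem_setOf_eq, exists_prop]
    constructor
    · intro hx
      obtain ⟨T', hT', hind, hmem⟩ := caratheodory T x hx
      exact ⟨T', ⟨hT', hind⟩, hmem⟩
    · rintro ⟨T', ⟨hT', _⟩, hmem⟩
      exact fg_mono hT' hmem
  rw [this]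
  refine Set.Finite.isClosed_biUnion ?_ fun T' hT' => isClosed_fg hT'.2
  exact (T.powerset.finite_toSet).subset fun T' hT' => Finset.mem_coe.mpr
    (Finset.mem_powerset.mpr hT'.1)

lemma isClosed_coneOf {D : Set (Fin q → ℝ)} (hD : D.Finite) : IsClosed (coneOf D) := by
  rw [coneOf_eq_fg hD]
  exact isClosed_fg_all _

lemma zero_mem_coneOf (B : Set (Fin q → ℝ)) : (0 : Fin q → ℝ) ∈ coneOf B :=
  mem_insert _ _

lemma smul_mem_coneOf {B : Set (Fin q → ℝ)} {t : ℝ} (ht : 0 ≤ t)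
    {a : Fin q → ℝ} (ha : a ∈ coneOf B) : t • a ∈ coneOf B := by
  rcases ha with rfl | ⟨l, hl, b, hb, rfl⟩
  · rw [smul_zero]; exact zero_mem_coneOf B
  · exact mem_insert_of_mem _ ⟨t * l, mul_nonneg ht hl, b, hb, smul_smul t l b⟩

lemma add_mem_coneOf {B : Set (Fin q → ℝ)} {a a' : Fin q → ℝ}
    (ha : a ∈ coneOf B) (ha' : a' ∈ coneOf B) : a + a' ∈ coneOf B := by
  rcases ha with rfl | ⟨l, hl, b, hb, rfl⟩
  · rwa [zero_add]
  rcases ha' with rfl | ⟨l', hl', b', hb', rfl⟩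
  · rw [add_zero]
    exact mem_insert_of_mem _ ⟨l, hl, b, hb, rfl⟩
  by_cases hsum : l + l' = 0
  · have hl0 : l = 0 := le_antisymm (by linarith) hl
    have hl'0 : l' = 0 := le_antisymm (by linarith) hl'
    rw [hl0, hl'0, zero_smul, zero_smul, add_zero]
    exact zero_mem_coneOf B
  have hpos : 0 < l + l' := lt_of_le_of_ne (by linarith) (Ne.symm hsum)
  refine mem_insert_of_mem _ ⟨l + l', hpos.le,
    (l / (l + l')) • b + (l' / (l + l')) • b', ?_, ?_⟩
  · exact (convex_convexHull ℝ B) hb hb' (div_nonneg hl hpos.le)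
      (div_nonneg hl' hpos.le) (by field_simp)
  · rw [smul_add, smul_smul, smul_smul]
    rw [mul_div_cancel₀ _ hsum, mul_div_cancel₀ _ hsum]

lemma convex_coneOf (B : Set (Fin q → ℝ)) : Convex ℝ (coneOf B) := by
  intro a ha a' ha' t t' ht ht' _
  exact add_mem_coneOf (smul_mem_coneOf ht ha) (smul_mem_coneOf ht' ha')

/-- the recession cone of `conv Y + cone D` is contained in `cone D` -/
lemma recCone_subset {Y D : Set (Fin q → ℝ)} (hY : Y.Finite) (hYne : Y.Nonempty)
    (hD : D.Finite) :
    recCone (convexHull ℝ Y + coneOf D) ⊆ coneOf D := by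
  intro d hd
  obtain ⟨y0, hy0⟩ := hYne
  have hy0' : y0 ∈ convexHull ℝ Y + coneOf D :=
    ⟨y0, subset_convexHull ℝ Y hy0, 0, zero_mem_coneOf D, add_zero y0⟩
  have hstep : ∀ n : ℕ, y0 + (n : ℝ) • d ∈ convexHull ℝ Y + coneOf D := by
    intro n
    induction n with
    | zero => simpa using hy0'
    | succ n ihn =>
      have := hd _ ihn
      push_cast
      rw [add_smul, one_smul, ← add_assoc]
      exact this
  choose p hp k hk heq using fun n => hstep n
  obtain ⟨M, hM⟩ := isBounded_iff_forall_norm_le.mp (hY.isCompact_convexHull ℝ).isBounded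
  -- the sequence (1/n) • k n tends to d and lies in the closed cone
  set u : ℕ → (Fin q → ℝ) := fun n => ((n : ℝ))⁻¹ • k n with hu
  have humem : ∀ n, u n ∈ coneOf D := fun n =>
    smul_mem_coneOf (inv_nonneg.mpr (Nat.cast_nonneg n)) (hk n)
  have hueq : ∀ n : ℕ, 1 ≤ n → u n - d = ((n : ℝ))⁻¹ • (y0 - p n) := by
    intro n hn
    have hn0 : (n : ℝ) ≠ 0 := Nat.cast_ne_zero.mpr (by omega)
    have hkn : k n = y0 - p n + (n : ℝ) • d := by
      have := heq n
      rw [eq_comm, ← sub_eq_iff_eq_add'] at this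
      rw [← this]
      abel
    rw [hu]
    simp only [hkn, smul_add, smul_smul, inv_mul_cancel₀ hn0, one_smul]
    abel
  have htend0 : Filter.Tendsto (fun n : ℕ => u n - d) Filter.atTop (nhds 0) := by
    apply squeeze_zero_norm' (a := fun n : ℕ => ((n : ℝ))⁻¹ * (‖y0‖ + M))
    · filter_upwards [Filter.eventually_ge_atTop 1] with n hn
      rw [hueq n hn, norm_smul]
      gcongr
      · simp
      · calc ‖y0 - p n‖ ≤ ‖y0‖ + ‖p n‖ := norm_sub_le _ _
          _ ≤ ‖y0‖ + M := by have := hM _ (hp n); linarith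
    · have h1 : Filter.Tendsto (fun n : ℕ => ((n : ℝ))⁻¹) Filter.atTop (nhds 0) :=
        tendsto_inv_atTop_zero.comp tendsto_natCast_atTop_atTop
      simpa using h1.mul_const (‖y0‖ + M)
  have htend : Filter.Tendsto u Filter.atTop (nhds d) := by
    have := htend0.add_const d
    simpa using this
  exact (isClosed_coneOf hD).mem_of_tendsto htend (Filter.Eventually.of_forall humem)

end ConeAux

theorem irredundant_points_are_minimizers
    (m n q r : ℕ) (A : Matrix (Fin m) (Fin n) ℝ) (b : Fin m → ℝ)
    (P : Matrix (Fin q) (Fin n) ℝ) (Z : Matrix (Fin q) (Fin r) ℝ)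
    (hker : ∀ y : Fin q → ℝ, Z.transpose.mulVec y = 0 → y = 0)
    (C : Set (Fin q → ℝ)) (hC : C = {y | ∀ j, 0 ≤ Z.transpose.mulVec y j})
    (S : Set (Fin n → ℝ)) (hS : S = {x | ∀ i, b i ≤ A.mulVec x i})
    (hSne : S.Nonempty)
    (UI : Set (Fin q → ℝ)) (hUI : UI = (P.mulVec '' S) + C)
    (L : Set (Fin q → ℝ)) (hL : L = recCone UI ∩ (-recCone UI))
    (hLC : L ∩ C = {0})
    (Xpoi Xdir : Set ((Fin n → ℝ) × (Fin q → ℝ)))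
    (hirr : IsIrredundantPPSolution A b P Z UI Xpoi Xdir) :
    ∀ s ∈ Xpoi, s.2 ∉ UI + (C \ {0}) := by
  obtain ⟨⟨hfinP, hfinD, hne, hconsP, hconsD, hUIeq⟩, hmin⟩ := hirr
  intro s hs hmem
  set Y : Set (Fin q → ℝ) := Prod.snd '' Xpoi with hYdef
  set K : Set (Fin q → ℝ) := coneOf (Prod.snd '' Xdir) with hKdef
  have hYfin : Y.Finite := hfinP.image _
  have hYne : Y.Nonempty := hne.image _
  have hDfin : (Prod.snd '' Xdir).Finite := hfinD.image _
  -- C is closed under addition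
  have hCadd : ∀ c1 ∈ C, ∀ c2 ∈ C, c1 + c2 ∈ C := by
    intro c1 h1 c2 h2
    rw [hC] at h1 h2 ⊢
    intro j
    rw [Matrix.mulVec_add]
    exact add_nonneg (h1 j) (h2 j)
  -- recession facts
  have hCrec : ∀ c' ∈ C, c' ∈ recCone UI := by
    intro c' hc' z hz
    rw [hUI] at hz ⊢
    obtain ⟨p0, hp0, c0, hc0, rfl⟩ := hz
    exact ⟨p0, hp0, c0 + c', hCadd _ hc0 _ hc', (add_assoc _ _ _).symm⟩
  have hKrec : ∀ k ∈ K, k ∈ recCone UI := by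
    intro k hk z hz
    rw [hUIeq] at hz ⊢
    obtain ⟨qv, hqv, k0, hk0, rfl⟩ := hz
    exact ⟨qv, hqv, k0 + k, ConeAux.add_mem_coneOf hk0 hk, (add_assoc _ _ _).symm⟩
  rw [Set.mem_add] at hmem
  obtain ⟨u, hu, c, hcmem, hyeq⟩ := hmem
  obtain ⟨hcC, hcne⟩ := hcmem
  have hcne' : c ≠ 0 := by simpa using hcne
  have hcK : c ∈ K := by
    apply ConeAux.recCone_subset hYfin hYne hDfin
    rw [← hUIeq]
    exact hCrec c hcC
  -- the degenerate situation forces c ∈ L ∩ C = {0}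
  have hdegen : ∀ k ∈ K, k + c = 0 → False := by
    intro k hk h0
    have h1 : c ∈ recCone UI := hCrec c hcC
    have h2 : c ∈ -recCone UI := by
      rw [Set.mem_neg]
      rw [show -c = k from neg_eq_of_add_eq_zero_left h0]
      exact hKrec k hk
    have h3 : c ∈ L ∩ C := ⟨by rw [hL]; exact ⟨h1, h2⟩, hcC⟩
    rw [hLC] at h3
    exact hcne' (by simpa using h3)
  set Y' : Set (Fin q → ℝ) := Prod.snd '' (Xpoi \ {s}) with hY'def
  have hY'sub : Y' ⊆ Y := image_mono diff_subset
  -- removing s still gives a solution, contradicting irredundancy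
  have finish : (Xpoi \ {s}).Nonempty → s.2 ∈ convexHull ℝ Y' + K → False := by
    intro hVne hyin
    have hKconv : Convex ℝ K := ConeAux.convex_coneOf _
    have hconvadd : Convex ℝ (convexHull ℝ Y' + K) := (convex_convexHull ℝ Y').add hKconv
    have hYsub2 : Y ⊆ convexHull ℝ Y' + K := by
      rintro a ⟨t, ht, rfl⟩
      by_cases hts : t = s
      · subst hts; exact hyin
      · exact ⟨t.2, subset_convexHull ℝ Y' ⟨t, ⟨ht, by simpa using hts⟩, rfl⟩, 0,
          ConeAux.zero_mem_coneOf _, add_zero _⟩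
    have hUI' : UI = convexHull ℝ Y' + K := by
      rw [hUIeq]
      apply Subset.antisymm
      · rintro z ⟨qv, hqv, k, hk, rfl⟩
        obtain ⟨a, ha, k', hk', rfl⟩ := convexHull_min hYsub2 hconvadd hqv
        exact ⟨a, ha, k' + k, ConeAux.add_mem_coneOf hk' hk, (add_assoc _ _ _).symm⟩
      · exact Set.add_subset_add_right (convexHull_mono hY'sub)
    have hsol : IsPPSolution A b P Z UI (Xpoi \ {s}) Xdir :=
      ⟨hfinP.subset diff_subset, hfinD, hVne, fun v hv => hconsP v hv.1, hconsD, hUI'⟩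
    obtain ⟨hVeq, -⟩ := hmin _ _ diff_subset (subset_refl _) hsol
    have hss : s ∈ Xpoi \ {s} := hVeq.symm ▸ hs
    exact hss.2 rfl
  by_cases hyY' : s.2 ∈ Y'
  · obtain ⟨t, ht, hts⟩ := id hyY'
    exact finish ⟨t, ht⟩
      ⟨s.2, subset_convexHull ℝ Y' hyY', 0, ConeAux.zero_mem_coneOf _, add_zero _⟩
  · have hY'eq : Y' = Y \ {s.2} := by
      apply Subset.antisymm
      · rintro a ⟨t, ⟨ht, hts⟩, rfl⟩
        refine ⟨⟨t, ht, rfl⟩, fun h => ?_⟩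
        exact hyY' ⟨t, ⟨ht, hts⟩, by simpa using h⟩
      · intro a ha
        obtain ⟨⟨t, ht, rfl⟩, hne2⟩ := ha
        exact ⟨t, ⟨ht, fun h => hne2 (by simp [show t = s by simpa using h])⟩, rfl⟩
    rw [hUIeq] at hu
    obtain ⟨qv, hqv, k, hk, huq⟩ := hu
    set F := hYfin.toFinset with hF
    rw [← hYfin.coe_toFinset, Finset.convexHull_eq] at hqv
    obtain ⟨w, hw0, hw1, hwc⟩ := hqv
    have hqveq : qv = ∑ z ∈ F, w z • z := by
      rw [← hwc, Finset.centerMass_eq_of_sum_1 _ _ hw1]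
      simp
      rfl
    have hyF : s.2 ∈ F := hYfin.mem_toFinset.mpr ⟨s, hs, rfl⟩
    have hsplit : qv = w s.2 • s.2 + ∑ z ∈ F.erase s.2, w z • z := by
      rw [hqveq, Finset.add_sum_erase F (fun z => w z • z) hyF]
    have hwsplit : w s.2 + ∑ z ∈ F.erase s.2, w z = 1 := by
      rw [Finset.add_sum_erase F w hyF]; exact hw1
    set σ := ∑ z ∈ F.erase s.2, w z with hσ
    have hσnn : 0 ≤ σ := Finset.sum_nonneg fun z hz => hw0 z (Finset.mem_of_mem_erase hz)
    have h1 : s.2 = (w s.2 • s.2 + ∑ z ∈ F.erase s.2, w z • z) + k + c := by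
      rw [← hsplit, show qv + k = u from huq, hyeq]
    have hmain : σ • s.2 = (∑ z ∈ F.erase s.2, w z • z) + (k + c) := by
      have hσeq : σ = 1 - w s.2 := by linarith [hwsplit]
      rw [hσeq, sub_smul, one_smul]
      calc s.2 - w s.2 • s.2
          = ((w s.2 • s.2 + ∑ z ∈ F.erase s.2, w z • z) + k + c) - w s.2 • s.2 := by
            rw [← h1]
        _ = (∑ z ∈ F.erase s.2, w z • z) + (k + c) := by abel
    by_cases hσ0 : σ = 0
    · have hall0 : ∀ z ∈ F.erase s.2, w z • z = (0 : Fin q → ℝ) := by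
        intro z hz
        have := (Finset.sum_eq_zero_iff_of_nonneg
          (fun z hz => hw0 z (Finset.mem_of_mem_erase hz))).mp hσ0 z hz
        rw [this, zero_smul]
      have h0 : k + c = 0 := by
        have h2 := hmain
        rw [hσ0, zero_smul, Finset.sum_eq_zero hall0, zero_add] at h2
        exact h2.symm
      exact hdegen k hk h0
    · have hσpos : 0 < σ := lt_of_le_of_ne hσnn (Ne.symm hσ0)
      have hcm : (F.erase s.2).centerMass w id ∈ convexHull ℝ Y' := by
        rw [hY'eq, ← hYfin.coe_toFinset, ← Finset.coe_erase]
        exact Finset.centerMass_mem_convexHull _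
          (fun i hi => hw0 i (Finset.mem_of_mem_erase hi)) hσpos
          (fun i hi => Finset.mem_coe.mpr hi)
      have hyrep : s.2 = (F.erase s.2).centerMass w id + σ⁻¹ • (k + c) := by
        rw [Finset.centerMass, ← hσ]
        have hid : ∑ z ∈ F.erase s.2, w z • id z = ∑ z ∈ F.erase s.2, w z • z := by simp
        rw [hid, ← smul_add, ← hmain, smul_smul, inv_mul_cancel₀ hσ0, one_smul]
      have hVne : (Xpoi \ {s}).Nonempty := by
        have hFne : (F.erase s.2).Nonempty := by
          by_contra h
          rw [Finset.not_nonempty_iff_eq_empty] at h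
          rw [hσ, h, Finset.sum_empty] at hσ0
          exact hσ0 rfl
        obtain ⟨z0, hz0⟩ := hFne
        have hz0' : z0 ∈ Y' := by
          rw [hY'eq, ← hYfin.coe_toFinset, ← Finset.coe_erase]
          exact Finset.mem_coe.mpr hz0
        obtain ⟨t, ht, -⟩ := hz0'
        exact ⟨t, ht⟩
      exact finish hVne ⟨_, hcm, σ⁻¹ • (k + c),
        ConeAux.smul_mem_coneOf (inv_nonneg.mpr hσnn)
          (ConeAux.add_mem_coneOf hk hcK), hyrep.symm⟩
end
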